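/- arXiv:2406.03073 — 5 statements merged into one kernel-verified Lean document; each statement's English description precedes it below -/
import Mathlib

section
/- There is an absolute constant C > 0 such that for every integer k ≥ 12 and every real number t, one has |log(|Γ(k − 1/2 + it)|²) − (k − 1)·log((k − 1/2)² + t²) + 2t·arctan(t/(k − 1/2)) + 2k| ≤ C, where Γ denotes the complex Gamma function. (Uniform Stirling expansion for the Gamma factor appearing in Watson's formula.) -/
open Complex Real

namespace StirlingAux

noncomputable def Hf (t x : ℝ) : ℝ :=
  x * Real.log (x^2 + t^2) - 2*x + 2*t*Real.arctan (x/t)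

lemma arctan_lip (a b : ℝ) : |Real.arctan a - Real.arctan b| ≤ |a - b| := by
  have h : ∀ x ∈ (Set.univ : Set ℝ),
      HasDerivWithinAt Real.arctan (1/(1+x^2)) Set.univ x :=
    fun x _ => (Real.hasDerivAt_arctan x).hasDerivWithinAt
  have bound : ∀ x ∈ (Set.univ : Set ℝ), ‖1/(1+x^2)‖ ≤ 1 := by
    intro x _
    rw [Real.norm_eq_abs, abs_of_pos (by positivity)]
    rw [div_le_one (by positivity)]
    nlinarith [sq_nonneg x]
  simpa using convex_univ.norm_image_sub_le_of_norm_hasDerivWithin_le h bound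
    (Set.mem_univ b) (Set.mem_univ a)

lemma abs_arctan_le (a : ℝ) : |Real.arctan a| ≤ |a| := by
  simpa using arctan_lip a 0

lemma hasDerivAt_f (t : ℝ) {x : ℝ} (hx : 0 < x^2 + t^2) :
    HasDerivAt (fun x => Real.log (x^2 + t^2)) (2*x/(x^2+t^2)) x := by
  have h1 : HasDerivAt (fun x : ℝ => x^2 + t^2) (2*x) x := by
    simpa using ((hasDerivAt_pow 2 x).add_const (t^2))
  simpa using h1.log hx.ne'

lemma hasDerivAt_H (t : ℝ) {x : ℝ} (hx : 0 < x) :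
    HasDerivAt (Hf t) (Real.log (x^2 + t^2)) x := by
  have hs : 0 < x^2 + t^2 := by positivity
  have hmul : HasDerivAt (fun x => x * Real.log (x^2 + t^2))
      (1 * Real.log (x^2+t^2) + x * (2*x/(x^2+t^2))) x :=
    (hasDerivAt_id x).mul (hasDerivAt_f t hs)
  have harc : HasDerivAt (fun x => 2*t*Real.arctan (x/t)) (2*t^2/(x^2+t^2)) x := by
    rcases eq_or_ne t 0 with rfl | ht
    · simpa using (hasDerivAt_const x (0:ℝ))
    · have h2 : HasDerivAt (fun x : ℝ => x/t) (1/t) x := by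
        simpa using (hasDerivAt_id x).div_const t
      have h3 : HasDerivAt (fun x => Real.arctan (x/t)) ((1/(1+(x/t)^2)) * (1/t)) x :=
        HasDerivAt.comp (h₂ := Real.arctan) x (Real.hasDerivAt_arctan (x/t)) h2
      have h4 := h3.const_mul (2*t)
      refine h4.congr_deriv ?_
      field_simp
      ring
  have hlin : HasDerivAt (fun x : ℝ => 2*x) 2 x := by
    simpa using (hasDerivAt_id x).const_mul 2
  have := (hmul.sub hlin).add harc
  refine this.congr_deriv ?_
  field_simp
  ring






lemma hasDerivAt_g (t : ℝ) {x : ℝ} (hx : 0 < x^2 + t^2) :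
    HasDerivAt (fun x => 2*x/(x^2+t^2))
      ((2*(x^2+t^2) - 2*x*(2*x))/(x^2+t^2)^2) x := by
  have h1 : HasDerivAt (fun x : ℝ => x^2 + t^2) (2*x) x := by
    simpa using ((hasDerivAt_pow 2 x).add_const (t^2))
  have h2 : HasDerivAt (fun x : ℝ => 2*x) 2 x := by
    simpa using (hasDerivAt_id x).const_mul 2
  exact h2.div h1 hx.ne'

/-- Lipschitz bound for g on [a, a+1], a ≥ 1. -/
lemma g_lip (t : ℝ) {a : ℝ} (ha : 1 ≤ a) {u v : ℝ}
    (hu : u ∈ Set.Icc a (a+1)) (hv : v ∈ Set.Icc a (a+1)) :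
    |2*u/(u^2+t^2) - 2*v/(v^2+t^2)| ≤ (2/(a^2+t^2)) * |u - v| := by
  have ha0 : 0 < a := lt_of_lt_of_le one_pos ha
  have hder : ∀ x ∈ Set.Icc a (a+1),
      HasDerivWithinAt (fun x => 2*x/(x^2+t^2))
        ((2*(x^2+t^2) - 2*x*(2*x))/(x^2+t^2)^2) (Set.Icc a (a+1)) x := by
    intro x hx
    have hxpos : 0 < x := lt_of_lt_of_le ha0 hx.1
    exact (hasDerivAt_g t (by positivity)).hasDerivWithinAt
  have hbound : ∀ x ∈ Set.Icc a (a+1),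
      ‖(2*(x^2+t^2) - 2*x*(2*x))/(x^2+t^2)^2‖ ≤ 2/(a^2+t^2) := by
    intro x hx
    have hxpos : 0 < x := lt_of_lt_of_le ha0 hx.1
    have hs : 0 < x^2 + t^2 := by positivity
    have has : 0 < a^2 + t^2 := by positivity
    have hax : a^2 + t^2 ≤ x^2 + t^2 := by nlinarith [hx.1]
    rw [Real.norm_eq_abs, abs_div, abs_of_pos (by positivity : (0:ℝ) < (x^2+t^2)^2)]
    have h1 : |2*(x^2+t^2) - 2*x*(2*x)| ≤ 2*(x^2+t^2) := by
      rw [abs_le]; constructor <;> nlinarith [sq_nonneg x, sq_nonneg t]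
    calc |2*(x^2+t^2) - 2*x*(2*x)| / (x^2+t^2)^2
        ≤ 2*(x^2+t^2) / (x^2+t^2)^2 := by
          apply div_le_div_of_nonneg_right h1 (by positivity) |>.trans_eq rfl
      _ = 2/(x^2+t^2) := by field_simp
      _ ≤ 2/(a^2+t^2) := by apply div_le_div_of_nonneg_left (by norm_num) has hax
  have := (convex_Icc a (a+1)).norm_image_sub_le_of_norm_hasDerivWithin_le hder hbound hv hu
  simpa [Real.norm_eq_abs] using this

/-- Midpoint estimate. -/
lemma midpoint_err (t : ℝ) {a : ℝ} (ha : 1 ≤ a) :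
    |(Hf t (a+1) - Hf t a) - Real.log ((a+1/2)^2 + t^2)| ≤ 1/(2*(a^2+t^2)) := by
  have ha0 : 0 < a := lt_of_lt_of_le one_pos ha
  set m : ℝ := a + 1/2 with hm
  set M : ℝ := 2/(a^2+t^2) with hM
  have hMpos : 0 < M := by positivity
  set f : ℝ → ℝ := fun x => Real.log (x^2 + t^2) with hf
  -- step 2: χ
  set χ : ℝ → ℝ := fun h => f (m+h) + f (m-h) - 2 * f m with hχ
  have hmem : ∀ h : ℝ, h ∈ Set.Icc (0:ℝ) (1/2) →
      m + h ∈ Set.Icc a (a+1) ∧ m - h ∈ Set.Icc a (a+1) := by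
    intro h hh
    constructor <;> constructor <;> [skip; skip; skip; skip] <;>
      simp only [hm] <;> [nlinarith [hh.1]; nlinarith [hh.2]; nlinarith [hh.2]; nlinarith [hh.1]]
  have hχder : ∀ h ∈ Set.Icc (0:ℝ) (1/2),
      HasDerivWithinAt χ (2*(m+h)/((m+h)^2+t^2) - 2*(m-h)/((m-h)^2+t^2))
        (Set.Icc (0:ℝ) (1/2)) h := by
    intro h hh
    obtain ⟨h1, h2⟩ := hmem h hh
    have hp1 : (0:ℝ) < m + h := lt_of_lt_of_le (by linarith) h1.1
    have hp2 : (0:ℝ) < m - h := lt_of_lt_of_le (by linarith) h2.1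
    have d1 : HasDerivAt (fun h : ℝ => f (m+h)) (2*(m+h)/((m+h)^2+t^2) * 1) h := by
      exact (hasDerivAt_f t (by positivity)).comp h ((hasDerivAt_id h).const_add m)
    have d2 : HasDerivAt (fun h : ℝ => f (m-h)) (2*(m-h)/((m-h)^2+t^2) * (-1)) h := by
      exact (hasDerivAt_f t (by positivity)).comp h ((hasDerivAt_id h).neg.const_add m)
    have := (d1.add d2).sub (hasDerivAt_const h (2 * f m))
    refine HasDerivAt.hasDerivWithinAt ?_
    convert this using 1
    · funext y; simp only [hχ, Pi.add_apply, Pi.sub_apply]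
    ring
  have hχbound : ∀ h ∈ Set.Icc (0:ℝ) (1/2), |χ h| ≤ M * h := by
    intro h hh
    have hb : ∀ x ∈ Set.Icc (0:ℝ) (1/2),
        ‖2*(m+x)/((m+x)^2+t^2) - 2*(m-x)/((m-x)^2+t^2)‖ ≤ M := by
      intro x hx
      obtain ⟨h1, h2⟩ := hmem x hx
      have := g_lip t ha h1 h2
      have habs : |(m+x) - (m-x)| = 2*x := by
        rw [_root_.abs_of_nonneg (by linarith [hx.1])]; ring
      rw [Real.norm_eq_abs]
      calc |2*(m+x)/((m+x)^2+t^2) - 2*(m-x)/((m-x)^2+t^2)|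
          ≤ (2/(a^2+t^2)) * |(m+x)-(m-x)| := this
        _ = (2/(a^2+t^2)) * (2*x) := by rw [habs]
        _ ≤ M := by
            rw [hM]
            have : 2*x ≤ 1 := by linarith [hx.2]
            nlinarith [div_pos (by norm_num : (0:ℝ) < 2) (show (0:ℝ) < a^2+t^2 by positivity)]
    have := (convex_Icc (0:ℝ) (1/2)).norm_image_sub_le_of_norm_hasDerivWithin_le
      hχder hb (Set.left_mem_Icc.mpr (by norm_num)) hh
    have hχ0 : χ 0 = 0 := by simp [hχ]; ring
    rw [Real.norm_eq_abs, Real.norm_eq_abs, hχ0, sub_zero, sub_zero,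
      _root_.abs_of_nonneg hh.1] at this
    exact this
  -- step 3: ψ
  set ψ : ℝ → ℝ := fun h => Hf t (m+h) - Hf t (m-h) - 2*h*(f m) with hψ
  have hψder : ∀ h ∈ Set.Icc (0:ℝ) (1/2),
      HasDerivWithinAt ψ (χ h) (Set.Icc (0:ℝ) (1/2)) h := by
    intro h hh
    obtain ⟨h1, h2⟩ := hmem h hh
    have hp1 : (0:ℝ) < m + h := lt_of_lt_of_le (by linarith) h1.1
    have hp2 : (0:ℝ) < m - h := lt_of_lt_of_le (by linarith) h2.1
    have d1 : HasDerivAt (fun h : ℝ => Hf t (m+h)) (f (m+h) * 1) h :=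
      (hasDerivAt_H t hp1).comp h ((hasDerivAt_id h).const_add m)
    have d2 : HasDerivAt (fun h : ℝ => Hf t (m-h)) (f (m-h) * (-1)) h :=
      (hasDerivAt_H t hp2).comp h ((hasDerivAt_id h).neg.const_add m)
    have d3 : HasDerivAt (fun h : ℝ => 2*h*(f m)) (2 * f m) h := by
      simpa using ((hasDerivAt_id h).const_mul 2).mul_const (f m)
    refine HasDerivAt.hasDerivWithinAt ?_
    have := (d1.sub d2).sub d3
    convert this using 1
    · funext y; simp only [hψ, Pi.sub_apply]
    simp only [hχ]
    ring
  have hψbound : ∀ h ∈ Set.Icc (0:ℝ) (1/2), ‖χ h‖ ≤ M * (1/2) := by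
    intro h hh
    rw [Real.norm_eq_abs]
    calc |χ h| ≤ M * h := hχbound h hh
      _ ≤ M * (1/2) := by nlinarith [hh.2, hMpos]
  have final := (convex_Icc (0:ℝ) (1/2)).norm_image_sub_le_of_norm_hasDerivWithin_le
    hψder hψbound (Set.left_mem_Icc.mpr (by norm_num))
    (Set.right_mem_Icc.mpr (by norm_num))
  have hψ0 : ψ 0 = 0 := by simp [hψ]
  rw [hψ0, sub_zero, Real.norm_eq_abs, Real.norm_eq_abs, _root_.abs_of_nonneg (by norm_num : (0:ℝ) ≤ 1/2 - 0)] at final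
  · have e1 : ψ (1/2) = (Hf t (a+1) - Hf t a) - Real.log ((a+1/2)^2+t^2) := by
      simp only [hψ, hm, hf]
      have e2 : a + 1/2 + 1/2 = a + 1 := by ring
      have e3 : a + 1/2 - 1/2 = a := by ring
      rw [e2, e3]
      ring
    rw [e1] at final
    calc |(Hf t (a+1) - Hf t a) - Real.log ((a+1/2)^2 + t^2)| ≤ M*(1/2)*(1/2-0) := final
      _ = 1/(2*(a^2+t^2)) := by rw [hM]; field_simp; ring





lemma Hf_zero (t : ℝ) : Hf t 0 = 0 := by simp [Hf]

lemma t_arctan_inv (t : ℝ) :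
    0 ≤ t * Real.arctan (1/t) ∧ t * Real.arctan (1/t) ≤ 1 := by
  have key : ∀ s : ℝ, 0 ≤ s → 0 ≤ s * Real.arctan (1/s) ∧ s * Real.arctan (1/s) ≤ 1 := by
    intro s hs
    rcases eq_or_lt_of_le hs with rfl | hs'
    · simp
    constructor
    · have : Real.arctan 0 ≤ Real.arctan (1/s) :=
        Real.arctan_strictMono.monotone (by positivity)
      rw [Real.arctan_zero] at this
      exact mul_nonneg hs this
    · have h := abs_arctan_le (1/s)
      rw [_root_.abs_of_pos (by positivity : (0:ℝ) < 1/s)] at h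
      have h2 : Real.arctan (1/s) ≤ 1/s := le_trans (le_abs_self _) h
      calc s * Real.arctan (1/s) ≤ s * (1/s) := by
            exact mul_le_mul_of_nonneg_left h2 hs
        _ = 1 := by field_simp
  rcases le_or_gt 0 t with ht | ht
  · exact key t ht
  · have h := key (-t) (by linarith)
    rw [show (1:ℝ)/(-t) = -(1/t) by ring, Real.arctan_neg] at h
    have e : (-t) * (-(Real.arctan (1/t))) = t * Real.arctan (1/t) := by ring
    rw [e] at h
    exact h

lemma err0 (t : ℝ) : |Real.log ((1/2)^2 + t^2) - (Hf t 1 - Hf t 0)| ≤ 2 + Real.log 4 := by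
  rw [Hf_zero, sub_zero]
  have h14 : (0:ℝ) < 1/4 + t^2 := by positivity
  have h1t : (0:ℝ) < 1 + t^2 := by positivity
  have hP1 : Real.log (1/4 + t^2) ≤ Real.log (1 + t^2) :=
    Real.log_le_log h14 (by linarith)
  have hP2 : Real.log (1 + t^2) - Real.log 4 ≤ Real.log (1/4 + t^2) := by
    have e : Real.log (1/4 + t^2) + Real.log 4 = Real.log (1 + 4*t^2) := by
      rw [← Real.log_mul h14.ne' (by norm_num)]
      ring_nf
    have h2 : Real.log (1 + t^2) ≤ Real.log (1 + 4*t^2) :=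
      Real.log_le_log h1t (by nlinarith [sq_nonneg t])
    linarith
  have hQ := t_arctan_inv t
  have hlog4 : (0:ℝ) ≤ Real.log 4 := Real.log_nonneg (by norm_num)
  have hHf1 : Hf t 1 = Real.log (1 + t^2) - 2 + 2*(t*Real.arctan (1/t)) := by
    simp [Hf]; ring
  rw [hHf1]
  have e2 : ((1:ℝ)/2)^2 = 1/4 := by norm_num
  rw [e2]
  rw [abs_le]
  constructor <;> nlinarith [hQ.1, hQ.2]

lemma basel (t : ℝ) : ∀ n : ℕ, (∑ j ∈ Finset.Ico 1 n, 1/(2*((j:ℝ)^2+t^2))) ≤ 1 := by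
  have key : ∀ n : ℕ, 1 ≤ n →
      (∑ j ∈ Finset.Ico 1 n, 1/(2*((j:ℝ)^2+t^2))) ≤ 1 - 1/(n:ℝ) := by
    intro n hn
    induction n with
    | zero => omega
    | succ m ih =>
      rcases Nat.lt_or_ge 1 (m+1) with hm | hm
      · have hm1 : 1 ≤ m := by omega
        have hmR : (1:ℝ) ≤ (m:ℝ) := by exact_mod_cast hm1
        rw [Finset.sum_Ico_succ_top hm1]
        have hterm : 1/(2*((m:ℝ)^2+t^2)) ≤ 1/(m:ℝ) - 1/((m:ℝ)+1) := by
          have hpos1 : (0:ℝ) < (m:ℝ) * ((m:ℝ)+1) := by nlinarith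
          have hpos2 : (0:ℝ) < 2*((m:ℝ)^2+t^2) := by nlinarith [sq_nonneg t]
          have e : 1/(m:ℝ) - 1/((m:ℝ)+1) = 1/((m:ℝ)*((m:ℝ)+1)) := by
            field_simp
            ring
          rw [e]
          apply one_div_le_one_div_of_le hpos1
          nlinarith [sq_nonneg t]
        have := ih hm1
        push_cast
        push_cast at this
        linarith
      · have : m + 1 = 1 := by omega
        rw [this]
        simp
  intro n
  rcases Nat.lt_or_ge n 1 with hn | hn
  · interval_cases n
    simp
  · have := key n hn
    have : (0:ℝ) ≤ 1/(n:ℝ) := by positivity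
    linarith [key n hn]

lemma sum_err (t : ℝ) {n : ℕ} (hn : 1 ≤ n) :
    |(∑ j ∈ Finset.range n, Real.log (((j:ℝ)+1/2)^2 + t^2)) - Hf t n| ≤ 3 + Real.log 4 := by
  have tele : ∑ j ∈ Finset.range n, (Hf t ((j:ℝ)+1) - Hf t (j:ℝ)) = Hf t n := by
    have h := Finset.sum_range_sub (fun j : ℕ => Hf t (j:ℝ)) n
    push_cast at h ⊢
    rw [Hf_zero, sub_zero] at h
    exact h
  have split : (∑ j ∈ Finset.range n, Real.log (((j:ℝ)+1/2)^2 + t^2)) - Hf t n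
      = ∑ j ∈ Finset.range n,
        (Real.log (((j:ℝ)+1/2)^2 + t^2) - (Hf t ((j:ℝ)+1) - Hf t (j:ℝ))) := by
    rw [Finset.sum_sub_distrib, tele]
  rw [split]
  set d : ℕ → ℝ := fun j =>
    Real.log (((j:ℝ)+1/2)^2 + t^2) - (Hf t ((j:ℝ)+1) - Hf t (j:ℝ)) with hd
  have habs : |∑ j ∈ Finset.range n, d j| ≤ ∑ j ∈ Finset.range n, |d j| :=
    Finset.abs_sum_le_sum_abs _ _
  have hsplit2 : ∑ j ∈ Finset.range n, |d j|
      = |d 0| + ∑ j ∈ Finset.Ico 1 n, |d j| := by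
    rw [Finset.range_eq_Ico, Finset.sum_eq_sum_Ico_succ_bot hn]
  have hd0 : |d 0| ≤ 2 + Real.log 4 := by
    have := err0 t
    simp only [hd, Nat.cast_zero]
    rw [Hf_zero] at this ⊢
    have e : ((0:ℝ)+1/2)^2 = (1/2:ℝ)^2 := by norm_num
    rw [e]
    simpa using this
  have hdj : ∀ j ∈ Finset.Ico 1 n, |d j| ≤ 1/(2*((j:ℝ)^2+t^2)) := by
    intro j hj
    have hj1 : 1 ≤ j := (Finset.mem_Ico.mp hj).1
    have hjR : (1:ℝ) ≤ (j:ℝ) := by exact_mod_cast hj1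
    have := midpoint_err t hjR
    simp only [hd]
    rw [abs_sub_comm]
    exact this
  have hsum2 : ∑ j ∈ Finset.Ico 1 n, |d j| ≤ ∑ j ∈ Finset.Ico 1 n, 1/(2*((j:ℝ)^2+t^2)) :=
    Finset.sum_le_sum hdj
  have := basel t n
  calc |∑ j ∈ Finset.range n, d j| ≤ ∑ j ∈ Finset.range n, |d j| := habs
    _ = |d 0| + ∑ j ∈ Finset.Ico 1 n, |d j| := hsplit2
    _ ≤ (2 + Real.log 4) + 1 := by
        have := hsum2.trans (basel t n)
        linarith
    _ = 3 + Real.log 4 := by ring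



lemma gamma_prod (t : ℝ) : ∀ n : ℕ,
    Complex.Gamma (1/2 + t*Complex.I + n) =
      Complex.Gamma (1/2 + t*Complex.I) *
        ∏ j ∈ Finset.range n, ((1/2 : ℂ) + t*Complex.I + j) := by
  intro n
  induction n with
  | zero => simp
  | succ m ih =>
    have hne : (1/2 : ℂ) + t*Complex.I + m ≠ 0 := by
      intro h
      have : ((1/2 : ℂ) + t*Complex.I + m).re = 0 := by rw [h]; simp
      simp [Complex.add_re] at this
      nlinarith [this, Nat.cast_nonneg (α := ℝ) m]
    have e : (1/2 : ℂ) + t*Complex.I + (m+1 : ℕ) = ((1/2 : ℂ) + t*Complex.I + m) + 1 := by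
      push_cast; ring
    rw [e, Complex.Gamma_add_one _ hne, ih, Finset.prod_range_succ]
    ring

lemma abs_gamma_half (t : ℝ) :
    ‖Complex.Gamma (1/2 + t*Complex.I)‖^2 = π / Real.cosh (π * t) := by
  set z : ℂ := 1/2 + t*Complex.I with hz
  have hconj : (starRingEnd ℂ) z = 1 - z := by
    simp [hz, Complex.ext_iff]
    norm_num
  have h1 : Complex.Gamma z * Complex.Gamma (1 - z) = π / Complex.sin (π * z) :=
    Complex.Gamma_mul_Gamma_one_sub z
  have h2 : Complex.sin (π * z) = Real.cosh (π * t) := by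
    have e : (π : ℂ) * z = π/2 - (-(π * t * Complex.I)) := by
      rw [hz]; push_cast; ring
    rw [e, Complex.sin_pi_div_two_sub, ← Complex.cos_neg]
    rw [show -(-((π : ℂ) * t * Complex.I)) = ((π * t : ℝ) : ℂ) * Complex.I by push_cast; ring]
    rw [Complex.cos_mul_I]
    rw [Complex.ofReal_cosh]
  have h3 : Complex.Gamma (1 - z) = (starRingEnd ℂ) (Complex.Gamma z) := by
    rw [← hconj, Complex.Gamma_conj]
  have h4 : ((‖Complex.Gamma z‖^2 : ℝ) : ℂ) = ((π / Real.cosh (π * t) : ℝ) : ℂ) := by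
    rw [Complex.sq_norm, ← Complex.mul_conj, ← h3, h1, h2, Complex.ofReal_div]
  exact_mod_cast h4



lemma cosh_bounds (x : ℝ) :
    0 ≤ |x| - Real.log (Real.cosh x) ∧ |x| - Real.log (Real.cosh x) ≤ Real.log 2 := by
  have hc : 0 < Real.cosh x := Real.cosh_pos x
  have he : Real.cosh x ≤ Real.exp |x| := by
    rw [Real.cosh_eq]
    have h1 : Real.exp x ≤ Real.exp |x| := Real.exp_le_exp.mpr (le_abs_self x)
    have h2 : Real.exp (-x) ≤ Real.exp |x| := Real.exp_le_exp.mpr (neg_le_abs x)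
    linarith
  have he2 : Real.exp |x| / 2 ≤ Real.cosh x := by
    rw [Real.cosh_eq]
    rcases le_or_gt 0 x with hx | hx
    · have : Real.exp |x| = Real.exp x := by rw [_root_.abs_of_nonneg hx]
      rw [this]
      have := Real.exp_pos (-x)
      linarith
    · have : Real.exp |x| = Real.exp (-x) := by rw [abs_of_neg hx]
      rw [this]
      have := Real.exp_pos x
      linarith
  constructor
  · have := Real.log_le_log hc he
    rw [Real.log_exp] at this
    linarith
  · have := Real.log_le_log (by positivity) he2
    rw [Real.log_div (Real.exp_pos _).ne' (by norm_num), Real.log_exp] at this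
    linarith

lemma A_bound (t : ℝ) {n : ℝ} (hn : 11 ≤ n) :
    |n * (Real.log (n^2+t^2) - Real.log ((n+1/2)^2+t^2))| ≤ 2 := by
  have hn0 : (0:ℝ) < n := by linarith
  have h1 : (0:ℝ) < n^2 + t^2 := by positivity
  have h2 : (0:ℝ) < (n+1/2)^2 + t^2 := by positivity
  set L : ℝ := Real.log ((n+1/2)^2+t^2) - Real.log (n^2+t^2) with hL
  have hL0 : 0 ≤ L := by
    have h := Real.log_le_log h1 (by nlinarith : n^2+t^2 ≤ (n+1/2)^2+t^2)
    simp only [hL]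
    linarith
  have hLle : L ≤ (n + 1/4)/(n^2+t^2) := by
    have e : L = Real.log (((n+1/2)^2+t^2)/(n^2+t^2)) := by
      rw [hL, Real.log_div h2.ne' h1.ne']
    have h3 : Real.log (((n+1/2)^2+t^2)/(n^2+t^2)) ≤ ((n+1/2)^2+t^2)/(n^2+t^2) - 1 :=
      Real.log_le_sub_one_of_pos (by positivity)
    have e2 : ((n+1/2)^2+t^2)/(n^2+t^2) - 1 = (n + 1/4)/(n^2+t^2) := by
      field_simp
      ring
    rw [e2] at h3
    rw [e]
    exact h3
  have hfinal : n * L ≤ 2 := by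
    have h4 : (n + 1/4)/(n^2+t^2) ≤ (n + 1/4)/n^2 := by
      apply div_le_div_of_nonneg_left (by linarith) (by positivity) (by nlinarith)
    have h5 : n * ((n + 1/4)/n^2) ≤ 2 := by
      have e3 : n * ((n + 1/4)/n^2) = (n + 1/4)/n := by
        field_simp
      rw [e3, div_le_iff₀ hn0]
      linarith
    calc n * L ≤ n * ((n + 1/4)/n^2) :=
          mul_le_mul_of_nonneg_left (hLle.trans h4) hn0.le
      _ ≤ 2 := h5
  rw [show n * (Real.log (n^2+t^2) - Real.log ((n+1/2)^2+t^2)) = -(n*L) by simp only [hL]; ring,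
    abs_neg, _root_.abs_of_nonneg (mul_nonneg hn0.le hL0)]
  exact hfinal




lemma B_bound (t : ℝ) {n σ : ℝ} (hn : 11 ≤ n) (hσ : σ = n + 1/2) :
    _root_.abs (2*t*Real.arctan (n/t) + 2*t*Real.arctan (t/σ) - π*|t|) ≤ 1 := by
  have hσ0 : (0:ℝ) < σ := by rw [hσ]; linarith
  rcases lt_trichotomy t 0 with ht | rfl | ht
  · have hinv : t/σ = (σ/t)⁻¹ := by
      field_simp
    have hneg : σ/t < 0 := div_neg_of_pos_of_neg hσ0 ht
    rw [hinv, Real.arctan_inv_of_neg hneg, abs_of_neg ht]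
    have e : 2*t*Real.arctan (n/t) + 2*t*(-(π/2) - Real.arctan (σ/t)) - π*(-t)
        = 2*t*(Real.arctan (n/t) - Real.arctan (σ/t)) := by ring
    rw [e, abs_mul]
    have h1 : |Real.arctan (n/t) - Real.arctan (σ/t)| ≤ |n/t - σ/t| := arctan_lip _ _
    have e2 : |n/t - σ/t| = (1/2)/(-t) := by
      rw [show n/t - σ/t = -((1/2)/t) by rw [hσ]; field_simp; ring]
      rw [abs_neg, abs_div, abs_of_neg ht, _root_.abs_of_pos (by norm_num : (0:ℝ) < 1/2)]
    have h2 : |2*t| = 2*(-t) := by rw [abs_of_neg (by linarith : 2*t < 0)]; ring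
    rw [h2]
    calc 2*(-t) * |Real.arctan (n/t) - Real.arctan (σ/t)| ≤ 2*(-t) * ((1/2)/(-t)) := by
          apply mul_le_mul_of_nonneg_left _ (by linarith)
          rw [← e2]; exact h1
      _ = 1 := by
          field_simp
          exact div_self (by linarith)
  · simp
  · have hinv : t/σ = (σ/t)⁻¹ := by field_simp
    have hpos : 0 < σ/t := div_pos hσ0 ht
    rw [hinv, Real.arctan_inv_of_pos hpos, _root_.abs_of_pos ht]
    have e : 2*t*Real.arctan (n/t) + 2*t*(π/2 - Real.arctan (σ/t)) - π*t
        = 2*t*(Real.arctan (n/t) - Real.arctan (σ/t)) := by ring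
    rw [e, abs_mul]
    have h1 : |Real.arctan (n/t) - Real.arctan (σ/t)| ≤ |n/t - σ/t| := arctan_lip _ _
    have e2 : |n/t - σ/t| = (1/2)/t := by
      rw [show n/t - σ/t = -((1/2)/t) by rw [hσ]; field_simp; ring]
      rw [abs_neg, abs_div, _root_.abs_of_pos ht, _root_.abs_of_pos (by norm_num : (0:ℝ) < 1/2)]
    have h2 : |2*t| = 2*t := by rw [_root_.abs_of_pos (by linarith : 0 < 2*t)]
    rw [h2]
    calc 2*t * |Real.arctan (n/t) - Real.arctan (σ/t)| ≤ 2*t * ((1/2)/t) := by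
          apply mul_le_mul_of_nonneg_left _ (by linarith)
          rw [← e2]; exact h1
      _ = 1 := by
          field_simp

lemma abs_factor (t : ℝ) (j : ℕ) :
    ‖(1/2:ℂ) + t*Complex.I + j‖^2 = ((j:ℝ)+1/2)^2 + t^2 := by
  rw [Complex.sq_norm, Complex.normSq_apply]
  simp
  ring

end StirlingAux

/-- Uniform Stirling expansion for the Gamma factor appearing in Watson's formula. -/
theorem stirling_gamma_factor :
    ∃ C : ℝ, 0 < C ∧ ∀ (k : ℤ), 12 ≤ k → ∀ t : ℝ,
      |Real.log (‖Complex.Gamma ((k : ℂ) - 1/2 + t * Complex.I)‖^2)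
        - ((k : ℝ) - 1) * Real.log (((k : ℝ) - 1/2)^2 + t^2)
        + 2 * t * Real.arctan (t / ((k : ℝ) - 1/2))
        + 2 * (k : ℝ)| ≤ C := by
  refine ⟨20, by norm_num, ?_⟩
  intro k hk t
  obtain ⟨n, hnk⟩ : ∃ n : ℕ, k = (n : ℤ) + 1 := ⟨(k-1).toNat, by omega⟩
  have hn11 : 11 ≤ n := by omega
  have hnR : (k : ℝ) = (n : ℝ) + 1 := by exact_mod_cast hnk
  have hnC : (k : ℂ) = (n : ℂ) + 1 := by exact_mod_cast hnk
  have hn11R : (11:ℝ) ≤ (n:ℝ) := by exact_mod_cast hn11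
  have hz : (k : ℂ) - 1/2 + t * Complex.I = 1/2 + t*Complex.I + n := by
    rw [hnC]; ring
  have hcosh : 0 < Real.cosh (π*t) := Real.cosh_pos _
  have hfacpos : ∀ j ∈ Finset.range n, (0:ℝ) < ((j:ℝ)+1/2)^2 + t^2 :=
    fun j _ => by positivity
  have hppos : 0 < ∏ j ∈ Finset.range n, (((j:ℝ)+1/2)^2 + t^2) :=
    Finset.prod_pos hfacpos
  have habs : ‖Complex.Gamma ((k : ℂ) - 1/2 + t * Complex.I)‖^2
      = (π / Real.cosh (π*t)) * ∏ j ∈ Finset.range n, (((j:ℝ)+1/2)^2 + t^2) := by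
    rw [hz, StirlingAux.gamma_prod t n, norm_mul, mul_pow, StirlingAux.abs_gamma_half,
      norm_prod, ← Finset.prod_pow]
    congr 1
    exact Finset.prod_congr rfl (fun j _ => StirlingAux.abs_factor t j)
  have hlog : Real.log (‖Complex.Gamma ((k : ℂ) - 1/2 + t * Complex.I)‖^2)
      = Real.log π - Real.log (Real.cosh (π*t))
        + ∑ j ∈ Finset.range n, Real.log (((j:ℝ)+1/2)^2 + t^2) := by
    rw [habs, Real.log_mul (ne_of_gt (div_pos Real.pi_pos hcosh)) hppos.ne',
      Real.log_div Real.pi_pos.ne' hcosh.ne',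
      Real.log_prod (fun j hj => (hfacpos j hj).ne')]
  rw [hlog, hnR, show ((n:ℝ)+1-1) = (n:ℝ) by ring,
    show ((n:ℝ)+1-1/2) = (n:ℝ)+1/2 by ring]
  set S : ℝ := ∑ j ∈ Finset.range n, Real.log (((j:ℝ)+1/2)^2 + t^2) with hS
  set E : ℝ := S - StirlingAux.Hf t n with hE
  set A : ℝ := (n:ℝ) * (Real.log ((n:ℝ)^2+t^2) - Real.log (((n:ℝ)+1/2)^2+t^2)) with hA
  set B : ℝ := 2*t*Real.arctan ((n:ℝ)/t) + 2*t*Real.arctan (t/((n:ℝ)+1/2)) - π*|t| with hB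
  set r : ℝ := π*|t| - Real.log (Real.cosh (π*t)) with hr
  have hiden : Real.log π - Real.log (Real.cosh (π*t)) + S
      - (n:ℝ) * Real.log (((n:ℝ)+1/2)^2 + t^2)
      + 2*t*Real.arctan (t/((n:ℝ)+1/2)) + 2*((n:ℝ)+1)
      = Real.log π + 2 + E + A + B + r := by
    simp only [hE, hA, hB, hr, StirlingAux.Hf]
    ring
  rw [hiden]
  have hEb : |E| ≤ 3 + Real.log 4 := StirlingAux.sum_err t (by omega)
  have hAb : |A| ≤ 2 := StirlingAux.A_bound t hn11R
  have hBb : |B| ≤ 1 := StirlingAux.B_bound t hn11R rfl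
  have hrb : 0 ≤ r ∧ r ≤ Real.log 2 := by
    have := StirlingAux.cosh_bounds (π*t)
    rw [abs_mul, _root_.abs_of_pos Real.pi_pos] at this
    exact this
  have hlogπ1 : 0 ≤ Real.log π := Real.log_nonneg (by linarith [Real.pi_gt_three])
  have hlogπ2 : Real.log π ≤ 3 := by
    have := Real.log_le_sub_one_of_pos Real.pi_pos
    linarith [Real.pi_le_four]
  have hlog4 : Real.log 4 ≤ 3 := by
    have := Real.log_le_sub_one_of_pos (by norm_num : (0:ℝ) < 4)
    linarith
  have hlog2 : Real.log 2 ≤ 1 := by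
    have := Real.log_le_sub_one_of_pos (by norm_num : (0:ℝ) < 2)
    linarith
  have hlog40 : 0 ≤ Real.log 4 := Real.log_nonneg (by norm_num)
  obtain ⟨hE1, hE2⟩ := abs_le.mp hEb
  obtain ⟨hA1, hA2⟩ := abs_le.mp hAb
  obtain ⟨hB1, hB2⟩ := abs_le.mp hBb
  rw [abs_le]
  constructor <;> linarith [hrb.1, hrb.2]
end

section
/- There is an absolute constant C > 0 such that for every integer k ≥ 12 and every real number t with |t| ≥ 100k, one has |Γ(k − 1/2 + it)| / Γ(k) ≤ C·exp(−|t|/2). -/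
open Complex Real

lemma my_Gamma_add_nat (z : ℂ) (hz : 0 < z.re) (n : ℕ) :
    Complex.Gamma (z + n) = (∏ j ∈ Finset.range n, (z + j)) * Complex.Gamma z := by
  induction n with
  | zero => simp
  | succ n ih =>
    have h0 : z + (n : ℂ) ≠ 0 := by
      intro h
      have : (z + (n : ℂ)).re = 0 := by rw [h]; simp
      simp only [Complex.add_re, Complex.natCast_re] at this
      have : (0:ℝ) ≤ (n:ℝ) := Nat.cast_nonneg n
      linarith [hz]
    have : z + ((n+1 : ℕ) : ℂ) = (z + n) + 1 := by push_cast; ring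
    rw [this, Complex.Gamma_add_one _ h0, ih, Finset.prod_range_succ]
    ring

lemma abs_Gamma_half_add (t : ℝ) :
    ‖Complex.Gamma (1/2 + t * Complex.I)‖
      ≤ Real.sqrt (2*π) * Real.exp (-(π * |t|) / 2) := by
  set z : ℂ := 1/2 + t * Complex.I with hz
  have hconj : (1 : ℂ) - z = (starRingEnd ℂ) z := by
    simp [hz, Complex.ext_iff]; norm_num
  have hrefl := Complex.Gamma_mul_Gamma_one_sub z
  rw [hconj, Complex.Gamma_conj] at hrefl
  have hsin : Complex.sin (π * z) = (Real.cosh (π * t) : ℂ) := by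
    have : (π : ℂ) * z = π/2 + (π * t) * Complex.I := by
      rw [hz]; ring
    rw [this, add_comm, Complex.sin_add_pi_div_two, Complex.cos_mul_I]
    norm_cast
  rw [Complex.mul_conj, hsin] at hrefl
  have hcosh_pos : 0 < Real.cosh (π * t) := Real.cosh_pos _
  have hnormSq : Complex.normSq (Complex.Gamma z) = π / Real.cosh (π * t) := by
    exact_mod_cast hrefl
  have habs : ‖Complex.Gamma z‖ = Real.sqrt (π / Real.cosh (π * t)) := by
    rw [Complex.norm_def, hnormSq]
  rw [habs]
  have hcosh_ge : Real.exp (π * |t|) / 2 ≤ Real.cosh (π * t) := by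
    have h1 : Real.exp (π * |t|) = Real.exp (|π * t|) := by
      rw [abs_mul, abs_of_pos Real.pi_pos]
    rw [h1, Real.cosh_eq]
    have := Real.exp_abs_le (π * t)
    linarith
  have hle : π / Real.cosh (π * t) ≤ 2 * π * Real.exp (-(π * |t|)) := by
    rw [div_le_iff₀ hcosh_pos]
    have hexp_pos : (0:ℝ) < Real.exp (-(π * |t|)) := Real.exp_pos _
    have hmul : Real.exp (-(π * |t|)) * Real.exp (π * |t|) = 1 := by
      rw [← Real.exp_add]; simp
    nlinarith [Real.pi_pos, mul_le_mul_of_nonneg_left hcosh_ge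
      (by positivity : (0:ℝ) ≤ 2 * π * Real.exp (-(π * |t|)))]
  calc Real.sqrt (π / Real.cosh (π * t))
      ≤ Real.sqrt (2 * π * Real.exp (-(π * |t|))) := Real.sqrt_le_sqrt hle
    _ = Real.sqrt (2 * π) * Real.exp (-(π * |t|) / 2) := by
        rw [show Real.exp (-(π * |t|)) = (Real.exp (-(π * |t|) / 2))^2 by
          rw [sq, ← Real.exp_add]; ring_nf]
        rw [Real.sqrt_mul (by positivity), Real.sqrt_sq (Real.exp_pos _).le]

/-- Exponential decay of the Gamma ratio for very large `t`: for `|t| ≥ 100 k`,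
`|Γ(k − 1/2 + it)| / Γ(k) ≤ C exp(−|t|/2)`. -/
theorem gamma_ratio_large_t :
    ∃ C : ℝ, 0 < C ∧ ∀ (k : ℤ), 12 ≤ k → ∀ t : ℝ, 100 * (k : ℝ) ≤ |t| →
      ‖Complex.Gamma ((k : ℂ) - 1/2 + t * Complex.I)‖ / Real.Gamma (k : ℝ)
        ≤ C * Real.exp (-|t| / 2) := by
  refine ⟨Real.sqrt (2*π), Real.sqrt_pos.mpr (by positivity), ?_⟩
  intro k hk t ht
  set n : ℕ := (k - 1).toNat with hn
  have hkn : ((n : ℤ)) = k - 1 := Int.toNat_of_nonneg (by omega)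
  have hknR : ((n : ℝ)) = (k : ℝ) - 1 := by exact_mod_cast congrArg (Int.cast : ℤ → ℝ) hkn
  have hknC : ((n : ℂ)) = (k : ℂ) - 1 := by exact_mod_cast congrArg (Int.cast : ℤ → ℂ) hkn
  set z : ℂ := 1/2 + t * Complex.I with hz
  have harg : (k : ℂ) - 1/2 + t * Complex.I = z + n := by
    rw [hz, hknC]; ring
  have hzre : 0 < z.re := by simp [hz]
  have hGamma_eq := my_Gamma_add_nat z hzre n
  -- denominator
  have hkR : (k : ℝ) = ((n : ℕ) : ℝ) + 1 := by rw [hknR]; ring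
  have hden : Real.Gamma (k : ℝ) = (Nat.factorial n : ℝ) := by
    rw [hkR]
    exact_mod_cast Real.Gamma_nat_eq_factorial n
  have hfac_pos : (0:ℝ) < (Nat.factorial n : ℝ) := by positivity
  -- |t| facts
  have htpos : (0:ℝ) ≤ |t| := abs_nonneg t
  have hkt : (k : ℝ) ≤ |t| / 100 := by
    have hk12 : (12:ℝ) ≤ (k:ℝ) := by exact_mod_cast hk
    linarith
  -- product bound
  have hprod : ‖∏ j ∈ Finset.range n, (z + j)‖ ≤ (1.01 * |t|) ^ n := by
    rw [norm_prod]
    have : ∀ j ∈ Finset.range n, ‖z + j‖ ≤ 1.01 * |t| := by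
      intro j hj
      have hjn : (j : ℝ) ≤ (n : ℝ) - 1 := by
        have h := Finset.mem_range.mp hj
        have h' : (j : ℝ) + 1 ≤ (n : ℝ) := by exact_mod_cast h
        linarith
      have h1 : ‖z + j‖ ≤ ‖z‖ + (j : ℝ) := by
        calc ‖z + j‖ ≤ ‖z‖ + ‖(j : ℂ)‖ :=
              norm_add_le _ _
          _ = ‖z‖ + (j : ℝ) := by
              congr 1
              rw [Complex.norm_natCast]
      have h2 : ‖z‖ ≤ 1/2 + |t| := by
        calc ‖z‖ ≤ ‖(1/2 : ℂ)‖ + ‖(t : ℂ) * Complex.I‖ :=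
              norm_add_le _ _
          _ = 1/2 + |t| := by
              simp [Complex.norm_real]
      have hk12 : (12:ℝ) ≤ (k:ℝ) := by exact_mod_cast hk
      have : (j : ℝ) ≤ (k : ℝ) - 2 := by rw [← hknR] at *; linarith
      have hjd : (j : ℝ) + 1/2 ≤ |t| / 100 := by linarith
      calc ‖z + j‖ ≤ 1/2 + |t| + (j:ℝ) := by linarith
        _ ≤ |t|/100 + |t| := by linarith
        _ ≤ 1.01 * |t| := by linarith
    calc ∏ j ∈ Finset.range n, ‖z + (j:ℂ)‖
        ≤ ∏ _j ∈ Finset.range n, (1.01 * |t|) := by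
          apply Finset.prod_le_prod
          · intro i _; exact norm_nonneg _
          · exact this
      _ = (1.01 * |t|) ^ n := by rw [Finset.prod_const, Finset.card_range]
  -- numerator bound
  have hnum : ‖Complex.Gamma ((k : ℂ) - 1/2 + t * Complex.I)‖
      ≤ (1.01 * |t|) ^ n * (Real.sqrt (2*π) * Real.exp (-(π * |t|) / 2)) := by
    rw [harg, hGamma_eq, norm_mul]
    exact mul_le_mul hprod (abs_Gamma_half_add t) (norm_nonneg _) (by positivity)
  -- combine
  rw [hden]
  rw [div_le_iff₀ hfac_pos]
  calc ‖Complex.Gamma ((k : ℂ) - 1/2 + t * Complex.I)‖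
      ≤ (1.01 * |t|) ^ n * (Real.sqrt (2*π) * Real.exp (-(π * |t|) / 2)) := hnum
    _ ≤ ((Nat.factorial n : ℝ) * Real.exp (1.01 * |t|)) *
          (Real.sqrt (2*π) * Real.exp (-(π * |t|) / 2)) := by
        apply mul_le_mul_of_nonneg_right _ (by positivity)
        have := Real.pow_div_factorial_le_exp (x := 1.01 * |t|) (by positivity) n
        rw [div_le_iff₀ hfac_pos] at this
        linarith
    _ ≤ Real.sqrt (2*π) * Real.exp (-|t| / 2) * (Nat.factorial n : ℝ) := by
        rw [show ((Nat.factorial n : ℝ) * Real.exp (1.01 * |t|)) *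
              (Real.sqrt (2*π) * Real.exp (-(π * |t|) / 2))
            = Real.sqrt (2*π) * (Real.exp (1.01 * |t|) * Real.exp (-(π * |t|) / 2))
                * (Nat.factorial n : ℝ) by ring]
        apply mul_le_mul_of_nonneg_right _ hfac_pos.le
        apply mul_le_mul_of_nonneg_left _ (Real.sqrt_nonneg _)
        rw [← Real.exp_add]
        apply Real.exp_le_exp.mpr
        nlinarith [Real.pi_gt_d6, htpos]
end

section
/- There is an absolute constant C > 0 such that for every integer k ≥ 12 and every real number t with |t| ≥ k^{2/3}, one has |Γ(k − 1/2 + it)| / Γ(k) ≤ C·exp(−k^{1/3}/4). -/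
open Complex Real

set_option maxHeartbeats 1000000

/-- `|Γ z| ≤ Γ (Re z)` for `Re z > 0`. -/
lemma abs_Gamma_le_aux {z : ℂ} (hz : 0 < z.re) :
    ‖Complex.Gamma z‖ ≤ Real.Gamma z.re := by
  rw [Complex.Gamma_eq_integral hz, Real.Gamma_eq_integral hz]
  rw [Complex.GammaIntegral]
  calc ‖∫ x in Set.Ioi (0:ℝ), (Real.exp (-x) : ℂ) * (x:ℂ) ^ (z - 1)‖
      ≤ ∫ x in Set.Ioi (0:ℝ), ‖(Real.exp (-x) : ℂ) * (x:ℂ) ^ (z - 1)‖ :=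
        MeasureTheory.norm_integral_le_integral_norm _
    _ = ∫ x in Set.Ioi (0:ℝ), Real.exp (-x) * x ^ (z.re - 1) := by
        refine MeasureTheory.setIntegral_congr_fun measurableSet_Ioi fun x hx => ?_
        rw [norm_mul, Complex.norm_real, Real.norm_eq_abs, _root_.abs_of_nonneg (Real.exp_pos (-x)).le,
          Complex.norm_cpow_eq_rpow_re_of_pos hx]
        simp

/-- Complex Gamma shift by a natural number. -/
lemma cGamma_shift (z : ℂ) (hz : 0 < z.re) (M : ℕ) :
    Complex.Gamma (z + M) = (∏ n ∈ Finset.range M, (z + n)) * Complex.Gamma z := by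
  induction M with
  | zero => simp
  | succ m ih =>
    have hne : z + m ≠ 0 := by
      intro h
      have h2 : (z + (m:ℂ)).re = 0 := by rw [h]; simp
      simp only [Complex.add_re, Complex.natCast_re] at h2
      have : (0:ℝ) ≤ (m:ℝ) := Nat.cast_nonneg m
      linarith
    have he : (z + ((m+1 : ℕ):ℂ)) = (z + m) + 1 := by push_cast; ring
    rw [he, Complex.Gamma_add_one _ hne, ih, Finset.prod_range_succ]; ring

/-- Real Gamma shift by a natural number. -/
lemma rGamma_shift (x : ℝ) (hx : 0 < x) (M : ℕ) :
    Real.Gamma (x + M) = (∏ n ∈ Finset.range M, (x + n)) * Real.Gamma x := by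
  induction M with
  | zero => simp
  | succ m ih =>
    have hne : x + (m:ℝ) ≠ 0 := by positivity
    have he : (x + ((m+1 : ℕ):ℝ)) = (x + m) + 1 := by push_cast; ring
    rw [he, Real.Gamma_add_one hne, ih, Finset.prod_range_succ]; ring

/-- For `|t| ≥ k^{2/3}`, one has `|Γ(k − 1/2 + it)| / Γ(k) ≤ C exp(−k^{1/3}/4)`. -/
theorem gamma_ratio_medium_t :
    ∃ C : ℝ, 0 < C ∧ ∀ (k : ℤ), 12 ≤ k → ∀ t : ℝ, (k : ℝ) ^ ((2 : ℝ)/3) ≤ |t| →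
      ‖Complex.Gamma ((k : ℂ) - 1/2 + t * Complex.I)‖ / Real.Gamma (k : ℝ)
        ≤ C * Real.exp (-(k : ℝ) ^ ((1 : ℝ)/3) / 4) := by
  refine ⟨1, one_pos, fun k hk t ht => ?_⟩
  rw [one_mul]
  set u : ℝ := (k : ℝ) with hu
  have hu12 : (12:ℝ) ≤ u := by rw [hu]; exact_mod_cast hk
  have hu0 : (0:ℝ) < u := by linarith
  set p : ℝ := u ^ ((1:ℝ)/3) with hp
  have hp0 : 0 < p := Real.rpow_pos_of_pos hu0 _
  have hp3 : p ^ 3 = u := by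
    rw [hp, ← Real.rpow_natCast (u ^ ((1:ℝ)/3)) 3, ← Real.rpow_mul hu0.le]
    norm_num
  have hp2 : p ^ 2 = u ^ ((2:ℝ)/3) := by
    rw [hp, ← Real.rpow_natCast (u ^ ((1:ℝ)/3)) 2, ← Real.rpow_mul hu0.le]
    norm_num
  have hp2_ge : (5:ℝ) ≤ p ^ 2 := by
    have h6 : (5:ℝ)^3 ≤ (p^2)^3 := by
      have he : (p^2)^3 = u^2 := by rw [← hp3]; ring
      rw [he]; nlinarith
    exact le_of_pow_le_pow_left₀ (by norm_num) (sq_nonneg p) h6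
  have hpu : 5 * p ≤ u := by nlinarith [hp3, hp2_ge, hp0]
  set σ : ℝ := u - 1/2 with hσ
  have hσ0 : (0:ℝ) < σ := by rw [hσ]; linarith
  have ht2 : p ^ 4 ≤ t ^ 2 := by
    have h1 : p ^ 2 ≤ |t| := by rw [hp2]; exact ht
    calc p ^ 4 = (p^2)^2 := by ring
      _ ≤ |t|^2 := by nlinarith [sq_nonneg p]
      _ = t ^ 2 := sq_abs t
  set M : ℕ := 9 * k.toNat with hM
  have hk0 : (0:ℤ) ≤ k := by linarith
  have hktr : ((k.toNat : ℕ) : ℝ) = u := by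
    rw [hu]
    exact_mod_cast congrArg (Int.cast : ℤ → ℝ) (Int.toNat_of_nonneg hk0)
  have hMr : (M : ℝ) = 9 * u := by rw [hM]; push_cast [hktr]; ring
  set z : ℂ := (σ : ℝ) + t * Complex.I with hz
  have hzre : z.re = σ := by rw [hz]; simp
  have hzeq : ((k : ℂ) - 1/2 + t * Complex.I) = z := by
    rw [hz, hσ, hu]; push_cast; ring
  rw [hzeq]
  clear_value z M σ p u
  -- |Γ z| * ∏ |z + n| = |Γ (z + M)| ≤ Γ (σ + M) = (∏ (σ+n)) * Γ σ
  have key : ‖Complex.Gamma z‖ * ∏ n ∈ Finset.range M, ‖z + n‖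
      ≤ (∏ n ∈ Finset.range M, (σ + n)) * Real.Gamma σ := by
    have h1 : ‖Complex.Gamma (z + M)‖
        = ‖Complex.Gamma z‖ * ∏ n ∈ Finset.range M, ‖z + n‖ := by
      rw [cGamma_shift z (by rw [hzre]; exact hσ0) M, norm_mul, Complex.norm_prod]
      ring
    have h2 : (z + M).re = σ + M := by simp [hzre]
    have h3 : ‖Complex.Gamma (z + M)‖ ≤ Real.Gamma (σ + M) := by
      have hre : 0 < (z + M).re := by
        rw [h2]
        have : (0:ℝ) ≤ (M:ℝ) := Nat.cast_nonneg M
        linarith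
      have := abs_Gamma_le_aux hre
      rwa [h2] at this
    rw [h1] at h3
    rwa [rGamma_shift σ hσ0 M] at h3
  have habs : ∀ n : ℕ, ‖z + n‖ = Real.sqrt ((σ + n)^2 + t^2) := by
    intro n
    rw [Complex.norm_def, Complex.normSq_apply]
    have h1 : (z + n).re = σ + n := by rw [hz]; simp
    have h2 : (z + n).im = t := by rw [hz]; simp
    rw [h1, h2]
    ring_nf
  have hGmono : Real.Gamma σ ≤ Real.Gamma u := by
    apply Real.Gamma_strictMonoOn_Ici.monotoneOn
    · rw [Set.mem_Ici, hσ]; linarith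
    · rw [Set.mem_Ici]; linarith
    · rw [hσ]; linarith
  have hGu0 : 0 < Real.Gamma u := Real.Gamma_pos_of_pos hu0
  have hden : ∀ n : ℕ, (0:ℝ) < Real.sqrt ((σ + n)^2 + t^2) := by
    intro n
    apply Real.sqrt_pos.mpr
    have h1 : (0:ℝ) < σ + n := by positivity
    positivity
  have step1 : ‖Complex.Gamma z‖ / Real.Gamma u
      ≤ ∏ n ∈ Finset.range M, ((σ + n) / Real.sqrt ((σ + n)^2 + t^2)) := by
    rw [div_le_iff₀ hGu0, Finset.prod_div_distrib]
    have hP : (0:ℝ) < ∏ n ∈ Finset.range M, Real.sqrt ((σ + n)^2 + t^2) :=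
      Finset.prod_pos fun n _ => hden n
    rw [div_mul_eq_mul_div, le_div_iff₀ hP]
    calc ‖Complex.Gamma z‖ * ∏ n ∈ Finset.range M, Real.sqrt ((σ + n)^2 + t^2)
        = ‖Complex.Gamma z‖ * ∏ n ∈ Finset.range M, ‖z + n‖ := by
          congr 1; exact Finset.prod_congr rfl fun n _ => (habs n).symm
      _ ≤ (∏ n ∈ Finset.range M, (σ + n)) * Real.Gamma σ := key
      _ ≤ (∏ n ∈ Finset.range M, (σ + n)) * Real.Gamma u := by
          apply mul_le_mul_of_nonneg_left hGmono
          apply Finset.prod_nonneg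
          intro n _
          positivity
  have step2 : ∏ n ∈ Finset.range M, ((σ + n) / Real.sqrt ((σ + n)^2 + t^2))
      ≤ Real.exp (-p / 4) := by
    have hf : ∀ n ∈ Finset.range M, (σ + n) / Real.sqrt ((σ + n)^2 + t^2)
        = Real.exp (Real.log ((σ + n) / Real.sqrt ((σ + n)^2 + t^2))) := by
      intro n _
      rw [Real.exp_log]
      have h1 : (0:ℝ) < σ + n := by positivity
      exact div_pos h1 (hden n)
    rw [Finset.prod_congr rfl hf, ← Real.exp_sum]
    apply Real.exp_le_exp.mpr
    have hterm : ∀ n ∈ Finset.range M,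
        Real.log ((σ + n) / Real.sqrt ((σ + n)^2 + t^2))
        ≤ -(9/32 * p^4) * (1/(σ + n) - 1/(σ + n + 1)) := by
      intro n _
      have hsn : (0:ℝ) < σ + n := by positivity
      have hsn1 : (0:ℝ) < σ + n + 1 := by positivity
      have hb : (σ + n)^2 + p^4 ≤ (σ + n)^2 + t^2 := by linarith
      have h1 : Real.log ((σ + n) / Real.sqrt ((σ + n)^2 + t^2))
          = Real.log (σ + n) - Real.log ((σ + n)^2 + t^2) / 2 := by
        rw [Real.log_div hsn.ne' (hden n).ne', Real.log_sqrt (by positivity)]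
      have h2 : p^4 / ((σ + n)^2 + p^4)
          ≤ Real.log ((σ + n)^2 + p^4) - Real.log ((σ + n)^2) := by
        have hpos1 : (0:ℝ) < (σ + n)^2 := by positivity
        have hpos2 : (0:ℝ) < (σ + n)^2 + p^4 := by positivity
        have hlog := Real.log_le_sub_one_of_pos
          (show (0:ℝ) < (σ+n)^2 / ((σ+n)^2 + p^4) by positivity)
        rw [Real.log_div hpos1.ne' hpos2.ne'] at hlog
        have heq : (σ+n)^2 / ((σ+n)^2 + p^4) - 1 = -(p^4 / ((σ+n)^2 + p^4)) := by
          field_simp; ring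
        rw [heq] at hlog
        linarith
      have h3 : Real.log ((σ + n)^2 + p^4) ≤ Real.log ((σ + n)^2 + t^2) :=
        Real.log_le_log (by positivity) hb
      have hlsq : Real.log ((σ + n)^2) = 2 * Real.log (σ + n) := by
        rw [sq, Real.log_mul hsn.ne' hsn.ne']; ring
      have h4 : Real.log ((σ + n) / Real.sqrt ((σ + n)^2 + t^2))
          ≤ -(1/2) * (p^4 / ((σ + n)^2 + p^4)) := by
        rw [h1]; linarith
      have hc : p^4 ≤ (7/9) * σ^2 := by
        have h6 : p^4 = u * p := by rw [← hp3]; ring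
        have h7 : u * p ≤ u^2 / 5 := by nlinarith [hpu, hu0]
        have h8 : (23/24) * u ≤ σ := by rw [hσ]; linarith
        have h9 : (23/24*u)^2 ≤ σ^2 := by
          nlinarith [mul_nonneg (by linarith : (0:ℝ) ≤ σ - 23/24*u)
            (by linarith : (0:ℝ) ≤ σ + 23/24*u)]
        nlinarith [h6, h7, h9]
      have h5 : (9/16 * p^4) * (1/(σ + n) - 1/(σ + n + 1))
          ≤ p^4 / ((σ + n)^2 + p^4) := by
        have hdiff : 1/(σ + n) - 1/(σ + n + 1) = 1/((σ + n) * (σ + n + 1)) := by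
          field_simp; ring
        rw [hdiff, mul_one_div, div_le_div_iff₀ (by positivity) (by positivity)]
        have hσn : σ^2 ≤ (σ + n)^2 := by
          nlinarith [Nat.cast_nonneg (α := ℝ) n, hσ0]
        have hc' : p^4 ≤ (7/9)*(σ+n)^2 := by nlinarith
        nlinarith [mul_nonneg (pow_pos hp0 4).le (sub_nonneg.mpr hc'),
          pow_pos hp0 4, hsn, hsn1, sq_nonneg (σ + n)]
      linarith [h4, h5]
    have htel : ∀ m : ℕ, ∑ n ∈ Finset.range m, (1/(σ + (n:ℝ)) - 1/(σ + n + 1))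
        = 1/σ - 1/(σ + m) := by
      intro m
      induction m with
      | zero => simp
      | succ j ih => rw [Finset.sum_range_succ, ih]; push_cast; ring
    calc ∑ n ∈ Finset.range M, Real.log ((σ + n) / Real.sqrt ((σ + n)^2 + t^2))
        ≤ ∑ n ∈ Finset.range M, (-(9/32 * p^4) * (1/(σ + (n:ℝ)) - 1/(σ + n + 1))) :=
          Finset.sum_le_sum hterm
      _ = -(9/32 * p^4) * (1/σ - 1/(σ + M)) := by rw [← Finset.mul_sum, htel M]
      _ ≤ -p / 4 := by
          have h1 : p^4 = u * p := by rw [← hp3]; ring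
          have hσM : σ + (M:ℝ) = 10 * u - 1/2 := by rw [hMr, hσ]; ring
          have hA : 1/(σ + (M:ℝ)) ≤ 1/(9*u) :=
            one_div_le_one_div_of_le (by linarith) (by rw [hσM]; linarith)
          have hB : 1/u ≤ 1/σ :=
            one_div_le_one_div_of_le hσ0 (by rw [hσ]; linarith)
          have hub : (8/9)/u ≤ 1/σ - 1/(σ + (M:ℝ)) := by
            have hD : 1/u - 1/(9*u) = (8/9) / u := by field_simp; ring
            linarith [hD ▸ (by linarith [hA, hB] : 1/u - 1/(9*u) ≤ 1/σ - 1/(σ + (M:ℝ)))]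
          have hfin : p/4 ≤ (9/32 * p^4) * (1/σ - 1/(σ + (M:ℝ))) := by
            calc p/4 = (9/32*(u*p)) * ((8/9)/u) := by field_simp; ring
              _ = (9/32 * p^4) * ((8/9)/u) := by rw [h1]
              _ ≤ (9/32 * p^4) * (1/σ - 1/(σ + (M:ℝ))) := by
                  apply mul_le_mul_of_nonneg_left hub (by positivity)
          linarith
  calc ‖Complex.Gamma z‖ / Real.Gamma u
      ≤ ∏ n ∈ Finset.range M, ((σ + n) / Real.sqrt ((σ + n)^2 + t^2)) := step1
    _ ≤ Real.exp (-p / 4) := step2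
end

section
/- There is an absolute constant C > 0 such that for every integer k ≥ 12 and every real number t with |t| ≤ k^{2/3}, one has |log(|Γ(k − 1/2 + it)|² / Γ(k)²) + t²/k + log k| ≤ C. -/
open Complex Real Filter Finset Topology


lemma lem_log_one_add_le {x : ℝ} (hx : 0 ≤ x) : Real.log (1+x) ≤ x := by
  have := Real.log_le_sub_one_of_pos (show (0:ℝ) < 1 + x by linarith)
  linarith

lemma lem_le_log_one_add {x : ℝ} (hx : 0 ≤ x) : x - x^2 ≤ Real.log (1+x) := by
  have h1 : (0:ℝ) < 1 + x := by linarith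
  have h2 : Real.log (1+x)⁻¹ ≤ (1+x)⁻¹ - 1 := Real.log_le_sub_one_of_pos (by positivity)
  rw [Real.log_inv] at h2
  have h3 : 1 - (1+x)⁻¹ ≤ Real.log (1+x) := by linarith
  have h4 : x - x^2 ≤ 1 - (1+x)⁻¹ := by
    have he : 1 - (1+x)⁻¹ = x/(1+x) := by field_simp; ring
    rw [he, le_div_iff₀ h1]
    nlinarith
  linarith

lemma gammaC_shift (w : ℂ) (hw : 0 < w.re) (n : ℕ) :
    Complex.Gamma (w + n) = (∏ j ∈ Finset.range n, (w + j)) * Complex.Gamma w := by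
  induction n with
  | zero => simp
  | succ n ih =>
    have hne : w + n ≠ 0 := by
      intro h
      have := congrArg Complex.re h
      simp at this
      have : (0:ℝ) ≤ (n:ℝ) := n.cast_nonneg
      linarith [hw, this]
    have : w + (n+1 : ℕ) = (w + n) + 1 := by push_cast; ring
    rw [this, Complex.Gamma_add_one _ hne, ih, Finset.prod_range_succ]
    ring

lemma gammaR_shift (n : ℕ) :
    Real.Gamma ((n:ℝ) + 1/2) = (∏ j ∈ Finset.range n, ((j:ℝ) + 1/2)) * Real.sqrt π := by
  induction n with
  | zero =>
    simpa using Real.Gamma_one_half_eq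
  | succ n ih =>
    have hne : (n:ℝ) + 1/2 ≠ 0 := by positivity
    have h : ((n+1 : ℕ):ℝ) + 1/2 = ((n:ℝ) + 1/2) + 1 := by push_cast; ring
    rw [h, Real.Gamma_add_one hne, ih, Finset.prod_range_succ]
    ring


lemma abs_gamma_half (t : ℝ) :
    ‖Complex.Gamma (1/2 + t*Complex.I)‖^2 = π / Real.cosh (π*t) := by
  set w : ℂ := 1/2 + t*Complex.I with hw
  have h1 : (1 : ℂ) - w = (starRingEnd ℂ) w := by
    apply Complex.ext <;> simp [hw] <;> norm_num
  have h2 : Complex.Gamma w * Complex.Gamma (1 - w) = ↑π / Complex.sin (↑π * w) :=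
    Complex.Gamma_mul_Gamma_one_sub w
  rw [h1, Complex.Gamma_conj, Complex.mul_conj] at h2
  have h3 : Complex.sin (↑π * w) = (Real.cosh (π*t) : ℂ) := by
    have he : (↑π : ℂ) * w = ↑π/2 + (↑π * ↑t) * Complex.I := by
      rw [hw]; push_cast; ring
    rw [he, Complex.sin_add, Complex.cos_mul_I, Complex.sin_mul_I,
      Complex.sin_pi_div_two, Complex.cos_pi_div_two]
    push_cast [Complex.ofReal_cosh]
    ring
  rw [h3] at h2
  have h4 : ‖Complex.Gamma w‖^2 = Complex.normSq (Complex.Gamma w) :=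
    Complex.sq_norm _
  rw [h4]
  have : ((Complex.normSq (Complex.Gamma w) : ℝ) : ℂ) = ((π / Real.cosh (π*t) : ℝ) : ℂ) := by
    rw [h2]; push_cast; ring
  exact_mod_cast this



lemma normSq_gammaSeq (z : ℂ) (hz : z.re = 1/2) {n : ℕ} (hn : 1 ≤ n) :
    Complex.normSq (Complex.GammaSeq z n)
      = ((n:ℝ) * ((n.factorial :ℝ))^2) / ∏ j ∈ Finset.range (n+1), Complex.normSq (z + j) := by
  rw [Complex.GammaSeq, map_div₀, map_mul, map_prod]
  congr 2
  · rw [show ((n:ℂ)) = (((n:ℝ)):ℂ) by push_cast; rfl]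
    rw [Complex.normSq_eq_norm_sq, Complex.norm_cpow_eq_rpow_re_of_pos (by exact_mod_cast hn) z, hz]
    rw [← Real.rpow_natCast ((n:ℝ) ^ ((1:ℝ)/2)) 2, ← Real.rpow_mul (Nat.cast_nonneg n)]
    norm_num
  · rw [show ((n.factorial:ℂ)) = (((n.factorial:ℝ)):ℂ) by push_cast; rfl, Complex.normSq_ofReal]
    ring

lemma cosh_prod (t : ℝ) :
    Tendsto (fun n => ∏ j ∈ Finset.range n, (1 + t^2/((j:ℝ)+1/2)^2)) atTop
      (𝓝 (Real.cosh (π*t))) := by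
  set w : ℂ := 1/2 + t*Complex.I with hw
  have hch : 0 < Real.cosh (π*t) := Real.cosh_pos _
  have hA : Tendsto (fun n => Complex.normSq (Complex.GammaSeq (1/2 : ℂ) n)) atTop
      (𝓝 π) := by
    have h0 : Complex.normSq (Complex.Gamma (1/2 : ℂ)) = π := by
      rw [show ((1/2 : ℂ)) = (((1/2:ℝ)):ℂ) by norm_num, Complex.Gamma_ofReal,
        Complex.normSq_ofReal]
      rw [Real.Gamma_one_half_eq]
      exact Real.mul_self_sqrt Real.pi_pos.le
    have := (Complex.continuous_normSq.tendsto _).comp (Complex.GammaSeq_tendsto_Gamma (1/2 : ℂ))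
    rw [h0] at this
    exact this
  have hB : Tendsto (fun n => Complex.normSq (Complex.GammaSeq w n)) atTop
      (𝓝 (π / Real.cosh (π*t))) := by
    have h0 : Complex.normSq (Complex.Gamma w) = π / Real.cosh (π*t) := by
      rw [← Complex.sq_norm]; exact abs_gamma_half t
    simpa [h0, Function.comp_def] using
      (Complex.continuous_normSq.tendsto _).comp (Complex.GammaSeq_tendsto_Gamma w)
  have hBne : π / Real.cosh (π*t) ≠ 0 := by positivity
  have hval : π / (π / Real.cosh (π*t)) = Real.cosh (π*t) := by
    field_simp
  have hAB : Tendsto (fun n => Complex.normSq (Complex.GammaSeq (1/2 : ℂ) n)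
      / Complex.normSq (Complex.GammaSeq w n)) atTop (𝓝 (Real.cosh (π*t))) := by
    have := hA.div hB hBne
    rwa [hval] at this
  have hkey : ∀ n : ℕ, 1 ≤ n →
      Complex.normSq (Complex.GammaSeq (1/2 : ℂ) n) / Complex.normSq (Complex.GammaSeq w n)
        = ∏ j ∈ Finset.range (n+1), (1 + t^2/((j:ℝ)+1/2)^2) := by
    intro n hn
    rw [normSq_gammaSeq (1/2 : ℂ) (by norm_num) hn, normSq_gammaSeq w (by simp [hw]) hn]
    have hQa : ∀ j : ℕ, Complex.normSq ((1/2 : ℂ) + j) = ((j:ℝ)+1/2)^2 := by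
      intro j
      rw [show ((1/2 : ℂ) + j) = ((((j:ℝ)+1/2 : ℝ)):ℂ) by push_cast; ring,
        Complex.normSq_ofReal]
      ring
    have hQb : ∀ j : ℕ, Complex.normSq (w + j) = ((j:ℝ)+1/2)^2 + t^2 := by
      intro j
      rw [show (w + j) = ((((j:ℝ)+1/2 : ℝ)):ℂ) + (t:ℝ)*Complex.I by rw [hw]; push_cast; ring,
        Complex.normSq_add_mul_I]
    simp only [hQa, hQb]
    have hc : (0:ℝ) < (n:ℝ) * ((n.factorial :ℝ))^2 := by
      have := n.factorial_pos
      have h1 : (0:ℝ) < (n.factorial : ℝ) := by exact_mod_cast this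
      have h2 : (0:ℝ) < (n:ℝ) := by exact_mod_cast hn
      positivity
    have haj : ∀ j : ℕ, (0:ℝ) < ((j:ℝ)+1/2)^2 := fun j => by positivity
    have hQane : (∏ j ∈ Finset.range (n+1), ((j:ℝ)+1/2)^2) ≠ 0 :=
      ne_of_gt (Finset.prod_pos fun j _ => haj j)
    have hQbne : (∏ j ∈ Finset.range (n+1), (((j:ℝ)+1/2)^2 + t^2)) ≠ 0 :=
      ne_of_gt (Finset.prod_pos fun j _ => by positivity)
    have h1 : ((n:ℝ) * ((n.factorial :ℝ))^2) / (∏ j ∈ Finset.range (n+1), ((j:ℝ)+1/2)^2)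
        / (((n:ℝ) * ((n.factorial :ℝ))^2) / ∏ j ∈ Finset.range (n+1), (((j:ℝ)+1/2)^2 + t^2))
        = (∏ j ∈ Finset.range (n+1), (((j:ℝ)+1/2)^2 + t^2))
          / ∏ j ∈ Finset.range (n+1), ((j:ℝ)+1/2)^2 := by
      rw [div_div_div_comm, div_self (ne_of_gt hc), one_div_div]
    rw [h1, ← Finset.prod_div_distrib]
    refine Finset.prod_congr rfl fun j _ => ?_
    field_simp
  -- conclude by shifting the index
  have hshift : Tendsto (fun n => ∏ j ∈ Finset.range (n+1), (1 + t^2/((j:ℝ)+1/2)^2)) atTop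
      (𝓝 (Real.cosh (π*t))) := by
    apply hAB.congr'
    filter_upwards [eventually_ge_atTop 1] with n hn
    exact hkey n hn
  exact (tendsto_add_atTop_iff_nat 1).mp hshift


lemma numeric_bounds (K : ℕ) (hK : 12 ≤ K) (t : ℝ) (ht2 : t^2 ≤ (K:ℝ)^((4:ℝ)/3)) :
    t^2 ≤ (K:ℝ)*((K:ℝ)-1) ∧ t^2*t^2 ≤ ((K:ℝ)-1)^3 := by
  have hKr : (12:ℝ) ≤ (K:ℝ) := by exact_mod_cast hK
  have hK0 : (0:ℝ) ≤ (K:ℝ) := by linarith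
  have hr0 : (0:ℝ) ≤ (K:ℝ)-1 := by linarith
  constructor
  · refine le_trans ht2 ?_
    have h3 : ((K:ℝ)^((4:ℝ)/3))^(3:ℕ) = (K:ℝ)^(4:ℕ) := by
      rw [← Real.rpow_natCast ((K:ℝ)^((4:ℝ)/3)) 3, ← Real.rpow_mul hK0]
      norm_num
    refine le_of_pow_le_pow_left₀ (n := 3) (by norm_num) (by nlinarith) ?_
    rw [h3]
    have hx : (K:ℝ) ≤ ((K:ℝ)-1)^3 := by nlinarith [sq_nonneg ((K:ℝ)-12), sq_nonneg ((K:ℝ)-1)]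
    calc (K:ℝ)^(4:ℕ) = (K:ℝ)^3 * (K:ℝ) := by ring
    _ ≤ (K:ℝ)^3 * (((K:ℝ)-1)^3) := mul_le_mul_of_nonneg_left hx (by positivity)
    _ = ((K:ℝ)*((K:ℝ)-1))^3 := by ring
  · have h4 : t^2*t^2 ≤ (K:ℝ)^((8:ℝ)/3) := by
      have := mul_le_mul ht2 ht2 (sq_nonneg t) (by positivity)
      calc t^2*t^2 ≤ (K:ℝ)^((4:ℝ)/3) * (K:ℝ)^((4:ℝ)/3) := this
      _ = (K:ℝ)^((8:ℝ)/3) := by rw [← Real.rpow_add' hK0 (by norm_num)]; norm_num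
    refine le_trans h4 ?_
    have h3 : ((K:ℝ)^((8:ℝ)/3))^(3:ℕ) = (K:ℝ)^(8:ℕ) := by
      rw [← Real.rpow_natCast ((K:ℝ)^((8:ℝ)/3)) 3, ← Real.rpow_mul hK0]
      norm_num
    refine le_of_pow_le_pow_left₀ (n := 3) (by norm_num) (by positivity) ?_
    rw [h3, ← pow_mul]
    have h6 : (K:ℝ) ≤ (12/11)*((K:ℝ)-1) := by linarith
    have h7 : (K:ℝ)^8 ≤ ((12/11)*((K:ℝ)-1))^8 := pow_le_pow_left₀ hK0 h6 8
    have h8 : ((12/11)*((K:ℝ)-1))^8 = (12/11:ℝ)^8 * ((K:ℝ)-1)^8 := mul_pow _ _ 8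
    have h9 : (12/11:ℝ)^8 * ((K:ℝ)-1)^8 ≤ 11 * ((K:ℝ)-1)^8 := by
      apply mul_le_mul_of_nonneg_right (by norm_num) (by positivity)
    have h10 : 11 * ((K:ℝ)-1)^8 ≤ ((K:ℝ)-1) * ((K:ℝ)-1)^8 := by
      apply mul_le_mul_of_nonneg_right (by linarith) (by positivity)
    calc (K:ℝ)^8 ≤ (12/11:ℝ)^8 * ((K:ℝ)-1)^8 := by rw [← h8]; exact h7
    _ ≤ 11 * ((K:ℝ)-1)^8 := h9
    _ ≤ ((K:ℝ)-1) * ((K:ℝ)-1)^8 := h10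
    _ = ((K:ℝ)-1)^(3*3) := by ring



set_option maxHeartbeats 800000 in
lemma tail_est (t : ℝ) (m : ℕ) (hm : 1 ≤ m) :
    t^2/((m:ℝ)+1/2) - t^2*t^2/(m:ℝ)^3
      ≤ Real.log (Real.cosh (π*t))
          - Real.log (∏ j ∈ Finset.range m, (1 + t^2/((j:ℝ)+1/2)^2))
    ∧ Real.log (Real.cosh (π*t))
          - Real.log (∏ j ∈ Finset.range m, (1 + t^2/((j:ℝ)+1/2)^2)) ≤ t^2/(m:ℝ) := by
  have hmr : (1:ℝ) ≤ (m:ℝ) := by exact_mod_cast hm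
  set x : ℕ → ℝ := fun j => t^2/((j:ℝ)+1/2)^2 with hxdef
  have hx0 : ∀ j, 0 ≤ x j := fun j => by positivity
  set P : ℕ → ℝ := fun n => ∏ j ∈ Finset.range n, (1 + x j) with hPdef
  have hPpos : ∀ n, 0 < P n := fun n => Finset.prod_pos fun j _ => by
    have := hx0 j; linarith
  have hlogP : ∀ n, Real.log (P n) = ∑ j ∈ Finset.range n, Real.log (1 + x j) :=
    fun n => Real.log_prod fun j _ => by have := hx0 j; positivity
  have hS : ∀ n, m ≤ n → Real.log (P n) - Real.log (P m)
      = ∑ j ∈ Finset.Ico m n, Real.log (1 + x j) := by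
    intro n hmn
    rw [hlogP, hlogP, Finset.sum_Ico_eq_sub _ hmn]
  have htendP : Tendsto P atTop (𝓝 (Real.cosh (π*t))) := cosh_prod t
  have hchpos : (0:ℝ) < Real.cosh (π*t) := Real.cosh_pos _
  have htendS : Tendsto (fun n => Real.log (P n) - Real.log (P m)) atTop
      (𝓝 (Real.log (Real.cosh (π*t)) - Real.log (P m))) := by
    exact (((Real.continuousAt_log (ne_of_gt hchpos)).tendsto.comp htendP).sub
      tendsto_const_nhds)
  set f : ℕ → ℝ := fun j => 1/(j:ℝ) with hfdef
  set g : ℕ → ℝ := fun j => 1/((j:ℝ)+1/2) with hgdef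
  have hTel : ∀ (h : ℕ → ℝ) n, m ≤ n →
      ∑ j ∈ Finset.Ico m n, (h j - h (j+1)) = h m - h n := by
    intro h n hmn
    rw [Finset.sum_Ico_eq_sub _ hmn, Finset.sum_range_sub' h, Finset.sum_range_sub' h]
    ring
  -- pointwise bounds for j ≥ m
  have hjfacts : ∀ j, m ≤ j → (1:ℝ) ≤ (j:ℝ) ∧ (m:ℝ) ≤ (j:ℝ) := by
    intro j hj
    have : (m:ℝ) ≤ (j:ℝ) := by exact_mod_cast hj
    exact ⟨le_trans hmr this, this⟩
  have hup : ∀ j, m ≤ j → Real.log (1 + x j) ≤ t^2 * (f j - f (j+1)) := by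
    intro j hj
    obtain ⟨hj1, -⟩ := hjfacts j hj
    have hjpos : (0:ℝ) < (j:ℝ) := by linarith
    have hfd : f j - f (j+1) = 1/((j:ℝ)*((j:ℝ)+1)) := by
      simp only [hfdef]
      push_cast
      field_simp
      try ring
    rw [hfd]
    refine le_trans (lem_log_one_add_le (hx0 j)) ?_
    rw [mul_one_div]
    exact div_le_div_of_nonneg_left (sq_nonneg t) (by positivity) (by nlinarith)
  have hlow : ∀ j, m ≤ j →
      t^2 * (g j - g (j+1)) - t^2*t^2/(m:ℝ)^2 * (f j - f (j+1)) ≤ Real.log (1 + x j) := by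
    intro j hj
    obtain ⟨hj1, hjm⟩ := hjfacts j hj
    have hjpos : (0:ℝ) < (j:ℝ) := by linarith
    refine le_trans ?_ (lem_le_log_one_add (hx0 j))
    have hgd : g j - g (j+1) = 1/(((j:ℝ)+1/2)*((j:ℝ)+3/2)) := by
      simp only [hgdef]
      push_cast
      field_simp
      try ring
    have hfd : f j - f (j+1) = 1/((j:ℝ)*((j:ℝ)+1)) := by
      simp only [hfdef]
      push_cast
      field_simp
      try ring
    have h1 : t^2 * (g j - g (j+1)) ≤ x j := by
      rw [hgd, mul_one_div, hxdef]
      exact div_le_div_of_nonneg_left (sq_nonneg t) (by positivity) (by nlinarith)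
    have h2 : (x j)^2 ≤ t^2*t^2/(m:ℝ)^2 * (f j - f (j+1)) := by
      rw [hfd, mul_one_div]
      have hx2 : (x j)^2 = t^2*t^2/(((j:ℝ)+1/2)^2)^2 := by
        simp only [hxdef]; rw [div_pow]; ring
      rw [hx2, div_div]
      have ha : (j:ℝ)*((j:ℝ)+1) ≤ ((j:ℝ)+1/2)^2 := by nlinarith
      have hb : (m:ℝ)^2 ≤ ((j:ℝ)+1/2)^2 := by nlinarith
      have hc1 : (0:ℝ) ≤ (j:ℝ)*((j:ℝ)+1) := by positivity
      have hc2 : (0:ℝ) ≤ ((j:ℝ)+1/2)^2 := by positivity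
      have hd := mul_le_mul hb ha hc1 hc2
      exact div_le_div_of_nonneg_left (by positivity) (by positivity) (by nlinarith)
    linarith
  constructor
  · -- lower bound on T
    have hf0 : Tendsto f atTop (𝓝 0) := tendsto_one_div_atTop_nhds_zero_nat
    have hg0 : Tendsto g atTop (𝓝 0) := by
      have h1 : Tendsto (fun n : ℕ => ((n:ℝ) + 1/2)) atTop atTop :=
        tendsto_atTop_add_const_right _ _ (tendsto_natCast_atTop_atTop (R := ℝ))
      have h2 := h1.inv_tendsto_atTop
      convert h2 using 1; ext n; simp [hgdef]
    have hlim : Tendsto (fun n => t^2 * (g m - g n) - t^2*t^2/(m:ℝ)^2 * (f m - f n)) atTop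
        (𝓝 (t^2 * g m - t^2*t^2/(m:ℝ)^2 * f m)) := by
      have hA : Tendsto (fun n => t^2 * (g m - g n)) atTop (𝓝 (t^2 * (g m - 0))) :=
        ((tendsto_const_nhds (x := g m)).sub hg0).const_mul (t^2)
      have hBt : Tendsto (fun n => t^2*t^2/(m:ℝ)^2 * (f m - f n)) atTop
          (𝓝 (t^2*t^2/(m:ℝ)^2 * (f m - 0))) :=
        ((tendsto_const_nhds (x := f m)).sub hf0).const_mul (t^2*t^2/(m:ℝ)^2)
      have := hA.sub hBt
      simpa using this
    have hle : t^2 * g m - t^2*t^2/(m:ℝ)^2 * f m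
        ≤ Real.log (Real.cosh (π*t)) - Real.log (P m) := by
      refine le_of_tendsto_of_tendsto hlim htendS ?_
      filter_upwards [eventually_ge_atTop m] with n hn
      rw [hS n hn]
      calc t^2 * (g m - g n) - t^2*t^2/(m:ℝ)^2 * (f m - f n)
          = ∑ j ∈ Finset.Ico m n, (t^2 * (g j - g (j+1)) - t^2*t^2/(m:ℝ)^2 * (f j - f (j+1)))
            := by rw [Finset.sum_sub_distrib, ← Finset.mul_sum, ← Finset.mul_sum,
                  hTel g n hn, hTel f n hn]
      _ ≤ ∑ j ∈ Finset.Ico m n, Real.log (1 + x j) :=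
            Finset.sum_le_sum fun j hj => hlow j (Finset.mem_Ico.mp hj).1
    refine le_trans ?_ hle
    have hgm : g m = 1/((m:ℝ)+1/2) := rfl
    have hfm : f m = 1/(m:ℝ) := rfl
    rw [hgm, hfm, mul_one_div, mul_one_div, div_div]
    apply le_of_eq
    ring
  · -- upper bound on T
    refine le_of_tendsto htendS ?_
    filter_upwards [eventually_ge_atTop m] with n hn
    rw [hS n hn]
    calc ∑ j ∈ Finset.Ico m n, Real.log (1 + x j)
        ≤ ∑ j ∈ Finset.Ico m n, t^2 * (f j - f (j+1)) :=
          Finset.sum_le_sum fun j hj => hup j (Finset.mem_Ico.mp hj).1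
    _ = t^2 * (f m - f n) := by rw [← Finset.mul_sum, hTel f n hn]
    _ ≤ t^2 * f m := by
          have h0 : (0:ℝ) ≤ f n := by simp only [hfdef]; positivity
          nlinarith [sq_nonneg t]
    _ = t^2/(m:ℝ) := by rw [hfdef]; rw [mul_one_div]


lemma gamma_ratio_bounds (K : ℕ) (hK : 12 ≤ K) :
    -Real.log ((K:ℝ)-1/2) ≤ 2*Real.log (Real.Gamma ((K:ℝ)-1/2)) - 2*Real.log (Real.Gamma (K:ℝ))
    ∧ 2*Real.log (Real.Gamma ((K:ℝ)-1/2)) - 2*Real.log (Real.Gamma (K:ℝ))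
        ≤ -Real.log ((K:ℝ)-1) := by
  have hKr : (12:ℝ) ≤ (K:ℝ) := by exact_mod_cast hK
  have hG : ∀ x : ℝ, 0 < x → 0 < Real.Gamma x := fun x hx => Real.Gamma_pos_of_pos hx
  have hconv := Real.convexOn_log_Gamma
  have habne : (0:ℝ) ≤ (1/2:ℝ) := by norm_num
  constructor
  · -- lower: 2 log Γ(K) ≤ 2 log Γ(K-1/2) + log (K-1/2)
    have h1 := hconv.2 (show ((K:ℝ)-1/2) ∈ Set.Ioi (0:ℝ) by simp; linarith)
      (show ((K:ℝ)+1/2) ∈ Set.Ioi (0:ℝ) by simp; linarith) habne habne (by norm_num)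
    have harg : (1/2:ℝ)•((K:ℝ)-1/2) + (1/2:ℝ)•((K:ℝ)+1/2) = (K:ℝ) := by
      simp [smul_eq_mul]; ring
    rw [harg] at h1
    simp only [Function.comp_apply, smul_eq_mul] at h1
    have hrec : Real.Gamma ((K:ℝ)+1/2) = ((K:ℝ)-1/2) * Real.Gamma ((K:ℝ)-1/2) := by
      have := Real.Gamma_add_one (show ((K:ℝ)-1/2) ≠ 0 by linarith)
      rw [show ((K:ℝ)-1/2)+1 = (K:ℝ)+1/2 by ring] at this
      exact this
    rw [hrec, Real.log_mul (by linarith) (ne_of_gt (hG _ (by linarith)))] at h1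
    linarith
  · have h1 := hconv.2 (show ((K:ℝ)-1) ∈ Set.Ioi (0:ℝ) by simp; linarith)
      (show ((K:ℝ)) ∈ Set.Ioi (0:ℝ) by simp; linarith) habne habne (by norm_num)
    have harg : (1/2:ℝ)•((K:ℝ)-1) + (1/2:ℝ)•((K:ℝ)) = (K:ℝ)-1/2 := by
      simp [smul_eq_mul]; ring
    rw [harg] at h1
    simp only [Function.comp_apply, smul_eq_mul] at h1
    have hrec : Real.Gamma ((K:ℝ)) = ((K:ℝ)-1) * Real.Gamma ((K:ℝ)-1) := by
      have := Real.Gamma_add_one (show ((K:ℝ)-1) ≠ 0 by linarith)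
      rw [show ((K:ℝ)-1)+1 = (K:ℝ) by ring] at this
      exact this
    have h2 : Real.log (Real.Gamma ((K:ℝ))) = Real.log ((K:ℝ)-1)
        + Real.log (Real.Gamma ((K:ℝ)-1)) := by
      rw [hrec, Real.log_mul (by linarith) (ne_of_gt (hG _ (by linarith)))]
    linarith

set_option maxHeartbeats 1000000 in
/-- For `|t| ≤ k^{2/3}`, `log(|Γ(k − 1/2 + it)|²/Γ(k)²) = −t²/k − log k + O(1)`. -/
theorem log_gamma_ratio_small_t :
    ∃ C : ℝ, 0 < C ∧ ∀ (k : ℤ), 12 ≤ k → ∀ t : ℝ, |t| ≤ (k : ℝ) ^ ((2 : ℝ)/3) →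
      |Real.log ((‖Complex.Gamma ((k : ℂ) - 1/2 + t * Complex.I)‖)^2
          / (Real.Gamma (k : ℝ))^2)
        + t^2 / (k : ℝ) + Real.log (k : ℝ)| ≤ C := by
  refine ⟨4, by norm_num, ?_⟩
  intro k hk t ht
  set K : ℕ := k.toNat with hKdef
  have hKk : (K:ℤ) = k := Int.toNat_of_nonneg (by omega)
  have hK12 : 12 ≤ K := by omega
  have hkK : (k:ℝ) = (K:ℝ) := by exact_mod_cast congrArg (Int.cast : ℤ → ℝ) hKk.symm
  have hkc : (k:ℂ) = (K:ℂ) := by exact_mod_cast congrArg (Int.cast : ℤ → ℂ) hKk.symm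
  have hKr : (12:ℝ) ≤ (K:ℝ) := by exact_mod_cast hK12
  set m : ℕ := K - 1 with hmdef
  have hm1 : 1 ≤ m := by omega
  have hmr : (m:ℝ) = (K:ℝ) - 1 := by
    have : ((K - 1 : ℕ):ℝ) = (K:ℝ) - 1 := by
      push_cast [Nat.cast_sub (show 1 ≤ K by omega)]; ring
    exact this
  have hmc : (m:ℂ) = (K:ℂ) - 1 := by
    have : ((K - 1 : ℕ):ℂ) = (K:ℂ) - 1 := by
      push_cast [Nat.cast_sub (show 1 ≤ K by omega)]; ring
    exact this
  have hmrpos : (0:ℝ) < (m:ℝ) := by rw [hmr]; linarith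
  -- t² bound
  have ht2 : t^2 ≤ (K:ℝ)^((4:ℝ)/3) := by
    have h1 : |t|^2 ≤ ((K:ℝ)^((2:ℝ)/3))^2 := by
      apply pow_le_pow_left₀ (abs_nonneg t)
      rw [← hkK]; exact ht
    rw [_root_.sq_abs] at h1
    refine le_trans h1 (le_of_eq ?_)
    rw [← Real.rpow_natCast ((K:ℝ)^((2:ℝ)/3)) 2, ← Real.rpow_mul (Nat.cast_nonneg K)]
    norm_num
  obtain ⟨hb1, hb2⟩ := numeric_bounds K hK12 t ht2
  obtain ⟨hTlow, hTup⟩ := tail_est t m hm1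
  obtain ⟨hB1low, hB1up⟩ := gamma_ratio_bounds K hK12
  -- notation
  set c : ℝ := Real.cosh (π*t) with hcdef
  have hcpos : 0 < c := Real.cosh_pos _
  set Pm : ℝ := ∏ j ∈ Finset.range m, (1 + t^2/((j:ℝ)+1/2)^2) with hPmdef
  have hPmpos : 0 < Pm := Finset.prod_pos fun j _ => by positivity
  set G : ℝ := Real.Gamma ((m:ℝ)+1/2) with hGdef
  have hGpos : 0 < G := Real.Gamma_pos_of_pos (by positivity)
  set F : ℝ := (m.factorial : ℝ) with hFdef
  have hFpos : 0 < F := by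
    simp only [hFdef]
    exact_mod_cast m.factorial_pos
  set A : ℝ := ∏ j ∈ Finset.range m, ((j:ℝ)+1/2) with hAdef
  have hApos : 0 < A := Finset.prod_pos fun j _ => by positivity
  have hGm : G = A * Real.sqrt π := gammaR_shift m
  -- Gamma of k is m!
  have hGamK : Real.Gamma ((k:ℝ)) = F := by
    rw [hkK, show (K:ℝ) = (m:ℝ)+1 by rw [hmr]; ring]
    exact Real.Gamma_nat_eq_factorial m
  -- the complex Gamma value
  have hz : (k:ℂ) - 1/2 + t*Complex.I = (1/2 + t*Complex.I) + (m:ℕ) := by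
    rw [hkc, hmc]; ring
  have habs2 : ‖Complex.Gamma ((k:ℂ) - 1/2 + t*Complex.I)‖^2
      = (∏ j ∈ Finset.range m, (((j:ℝ)+1/2)^2 + t^2)) * (π / c) := by
    rw [hz, gammaC_shift _ (by simp) m, norm_mul, mul_pow, norm_prod]
    rw [← Finset.prod_pow]
    congr 1
    · refine Finset.prod_congr rfl fun j _ => ?_
      rw [Complex.sq_norm, show (1/2 + t*Complex.I + (j:ℂ)) =
        ((((j:ℝ)+1/2 : ℝ)):ℂ) + (t:ℝ)*Complex.I by push_cast; ring,
        Complex.normSq_add_mul_I]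
    · exact abs_gamma_half t
  -- split the product
  have hsplit : (∏ j ∈ Finset.range m, (((j:ℝ)+1/2)^2 + t^2)) = A^2 * Pm := by
    rw [hAdef, hPmdef, ← Finset.prod_pow, ← Finset.prod_mul_distrib]
    refine Finset.prod_congr rfl fun j _ => ?_
    have : ((j:ℝ)+1/2)^2 ≠ 0 := by positivity
    field_simp
  -- ratio value
  have hA2 : A^2 * π = G^2 := by
    rw [hGm, mul_pow, Real.sq_sqrt Real.pi_pos.le]
  have hratio : ‖Complex.Gamma ((k:ℂ) - 1/2 + t*Complex.I)‖^2
      / (Real.Gamma ((k:ℝ)))^2 = G^2 * Pm / (c * F^2) := by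
    rw [habs2, hsplit, hGamK, ← hA2]
    field_simp
  have hlogratio : Real.log (‖Complex.Gamma ((k:ℂ) - 1/2 + t*Complex.I)‖^2
      / (Real.Gamma ((k:ℝ)))^2)
      = 2*Real.log G + Real.log Pm - Real.log c - 2*Real.log F := by
    rw [hratio, Real.log_div (by positivity) (by positivity),
      Real.log_mul (by positivity) (ne_of_gt hPmpos),
      Real.log_mul (ne_of_gt hcpos) (by positivity),
      Real.log_pow, Real.log_pow]
    push_cast
    ring
  -- identify G and F with Gamma at K-1/2, K
  have hGK : G = Real.Gamma ((K:ℝ)-1/2) := by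
    rw [hGdef, hmr]
    congr 1
    ring
  have hFK : Real.log F = Real.log (Real.Gamma ((K:ℝ))) := by
    rw [← hGamK, hkK]
  -- bracket 1 bounds
  have hlogK1 : Real.log ((K:ℝ)-1/2) ≤ Real.log (K:ℝ) :=
    Real.log_le_log (by linarith) (by linarith)
  have hlog2 : Real.log (K:ℝ) - Real.log ((K:ℝ)-1) ≤ 1 := by
    have h1 : Real.log (K:ℝ) ≤ Real.log (2*((K:ℝ)-1)) :=
      Real.log_le_log (by linarith) (by linarith)
    rw [Real.log_mul (by norm_num) (by linarith)] at h1
    have h2 : Real.log 2 ≤ 1 := by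
      have := Real.log_le_sub_one_of_pos (show (0:ℝ) < 2 by norm_num)
      linarith
    linarith
  have hB1 : 0 ≤ 2*Real.log G - 2*Real.log F + Real.log (K:ℝ)
      ∧ 2*Real.log G - 2*Real.log F + Real.log (K:ℝ) ≤ 1 := by
    rw [hGK, hFK]
    constructor
    · linarith
    · linarith
  -- bracket 2 bounds : T := log c - log Pm
  have hdiff : t^2/(m:ℝ) - t^2/(K:ℝ) = t^2/((K:ℝ)*((K:ℝ)-1)) := by
    rw [hmr]
    have h0 : (K:ℝ) ≠ 0 := by linarith
    have h1 : (K:ℝ)-1 ≠ 0 := by linarith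
    field_simp
    ring
  have hd1 : t^2/((K:ℝ)*((K:ℝ)-1)) ≤ 1 := by
    rw [div_le_one (by nlinarith)]; exact hb1
  have hTup' : Real.log c - Real.log Pm ≤ t^2/(K:ℝ) + 1 := by
    refine le_trans hTup ?_
    linarith
  have hd2 : t^2/(K:ℝ) ≤ t^2/((m:ℝ)+1/2) := by
    have hmm : (0:ℝ) < (m:ℝ)+1/2 := by linarith
    have hle : (m:ℝ)+1/2 ≤ (K:ℝ) := by rw [hmr]; linarith
    exact div_le_div_of_nonneg_left (sq_nonneg t) hmm hle
  have hd3 : t^2*t^2/(m:ℝ)^3 ≤ 1 := by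
    rw [div_le_one (by positivity), hmr]
    exact hb2
  have hTlow' : t^2/(K:ℝ) - 1 ≤ Real.log c - Real.log Pm := by
    refine le_trans ?_ hTlow
    linarith
  -- final assembly
  rw [hlogratio, hkK]
  have hfinal : 2*Real.log G + Real.log Pm - Real.log c - 2*Real.log F
      + t^2/(K:ℝ) + Real.log (K:ℝ)
      = (2*Real.log G - 2*Real.log F + Real.log (K:ℝ))
        + (t^2/(K:ℝ) - (Real.log c - Real.log Pm)) := by ring
  rw [hfinal]
  rw [abs_le]
  constructor
  · linarith [hB1.1]
  · linarith [hB1.2]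
end

section
/- Let x be a complex number and a : ℕ → ℂ a sequence satisfying a(0) = 1, a(1) = x, and a(n+2) = x·a(n+1) − a(n) for all n ≥ 0. Then for every natural number m, x^{2m} = ∑_{l=0}^{m} [(2m)!·(2l+1) / ((m−l)!·(m+l+1)!)] · a(2l). -/
open Finset

set_option maxHeartbeats 1000000

noncomputable def hc (m l : ℕ) : ℂ :=
  if l ≤ m then (((2 * m).factorial * (2 * l + 1) : ℂ) /
        ((m - l).factorial * (m + l + 1).factorial : ℂ)) else 0

lemma hc_of_gt {m l : ℕ} (h : m < l) : hc m l = 0 := by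
  rw [hc, if_neg (by omega)]

lemma fact_nz (n : ℕ) : ((n.factorial : ℂ)) ≠ 0 :=
  Nat.cast_ne_zero.mpr n.factorial_ne_zero

lemma hc_diag (m : ℕ) : hc m m = 1 := by
  rw [hc, if_pos le_rfl, Nat.sub_self, show m + m + 1 = 2*m + 1 by ring,
    div_eq_one_iff_eq (mul_ne_zero (fact_nz _) (fact_nz _))]
  push_cast [Nat.factorial_succ, Nat.factorial_zero]
  ring

lemma fpeel (n : ℕ) : ((n+1).factorial : ℂ) = (n+1) * n.factorial := by
  rw [Nat.factorial_succ]; push_cast; ring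

lemma natc_nz (n : ℕ) (h : n ≠ 0) : ((n : ℂ)) ≠ 0 := Nat.cast_ne_zero.mpr h

lemma hc_rec (m l : ℕ) : hc (m+1) (l+1) = hc m l + 2 * hc m (l+1) + hc m (l+2) := by
  rcases lt_or_ge m l with h | h
  · rw [show hc (m+1) (l+1) = 0 from hc_of_gt (by omega),
        show hc m l = 0 from hc_of_gt (by omega),
        show hc m (l+1) = 0 from hc_of_gt (by omega),
        show hc m (l+2) = 0 from hc_of_gt (by omega)]
    ring
  rcases Nat.lt_or_ge l m with h2 | h2
  swap
  · -- l = m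
    have : l = m := le_antisymm h h2
    subst this
    rw [hc_diag, hc_diag, show hc l (l+1) = 0 from hc_of_gt (by omega),
        show hc l (l+2) = 0 from hc_of_gt (by omega)]
    ring
  rcases Nat.lt_or_ge (l+1) m with h3 | h3
  swap
  · -- m = l + 1
    have : m = l + 1 := by omega
    subst this
    rw [show hc (l+1) (l+2) = 0 from hc_of_gt (by omega), hc_diag,
        hc, if_pos (by omega : l + 1 ≤ l + 1 + 1), hc, if_pos (by omega : l ≤ l + 1)]
    rw [show l + 1 + 1 - (l + 1) = 1 by omega, show l + 1 - l = 1 by omega,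
      show l + 1 + 1 + (l + 1) + 1 = 2*l + 4 by ring, show l + 1 + l + 1 = 2*l + 2 by ring,
      show 2 * (l+1+1) = 2*l + 4 by ring, show 2*(l+1) = 2*l+2 by ring]
    have e1 : ((2*l+4).factorial : ℂ) = (2*l+4)*(2*l+3)*((2*l+2).factorial) := by
      rw [show 2*l+4 = (2*l+2)+1+1 by ring, fpeel, fpeel]; push_cast; ring
    rw [e1]
    have n1 := fact_nz (2*l+2)
    have p1 : (2*(l:ℂ)+4) ≠ 0 := by exact_mod_cast natc_nz (2*l+4) (by omega)
    have p2 : (2*(l:ℂ)+3) ≠ 0 := by exact_mod_cast natc_nz (2*l+3) (by omega)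
    rw [Nat.factorial_one]
    field_simp
    push_cast
    ring
  · -- m ≥ l + 2
    obtain ⟨k, rfl⟩ : ∃ k, m = l + 2 + k := ⟨m - (l+2), by omega⟩
    rw [hc, if_pos (by omega), hc, if_pos (by omega), hc, if_pos (by omega), hc, if_pos (by omega)]
    rw [show l + 2 + k + 1 - (l + 1) = k + 2 by omega,
        show l + 2 + k - l = k + 2 by omega,
        show l + 2 + k - (l+1) = k + 1 by omega,
        show l + 2 + k - (l+2) = k by omega,
        show l + 2 + k + 1 + (l + 1) + 1 = 2*l + k + 5 by ring,
        show l + 2 + k + l + 1 = 2*l + k + 3 by ring,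
        show l + 2 + k + (l + 1) + 1 = 2*l + k + 4 by ring,
        show l + 2 + k + (l + 2) + 1 = 2*l + k + 5 by ring,
        show 2 * (l + 2 + k + 1) = 2*l + 2*k + 6 by ring,
        show 2 * (l + 2 + k) = 2*l + 2*k + 4 by ring]
    have e1 : ((2*l+2*k+6).factorial : ℂ) = (2*l+2*k+6)*(2*l+2*k+5)*((2*l+2*k+4).factorial) := by
      rw [show 2*l+2*k+6 = (2*l+2*k+4)+1+1 by ring, fpeel, fpeel]; push_cast; ring
    have e2 : ((k+2).factorial : ℂ) = (k+2)*(k+1)*(k.factorial) := by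
      rw [show k+2 = k+1+1 by ring, fpeel, fpeel]; push_cast; ring
    have e3 : ((k+1).factorial : ℂ) = (k+1)*(k.factorial) := by
      rw [fpeel]
    have e4 : ((2*l+k+5).factorial : ℂ) = (2*l+k+5)*(2*l+k+4)*((2*l+k+3).factorial) := by
      rw [show 2*l+k+5 = (2*l+k+3)+1+1 by ring, fpeel, fpeel]; push_cast; ring
    have e5 : ((2*l+k+4).factorial : ℂ) = (2*l+k+4)*((2*l+k+3).factorial) := by
      rw [show 2*l+k+4 = (2*l+k+3)+1 by ring, fpeel]; push_cast; ring
    have hb1 : (((k+2).factorial : ℂ) * ((2*l+k+3).factorial : ℂ)) ≠ 0 :=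
      mul_ne_zero (fact_nz _) (fact_nz _)
    have hb2 : (((k+1).factorial : ℂ) * ((2*l+k+4).factorial : ℂ)) ≠ 0 :=
      mul_ne_zero (fact_nz _) (fact_nz _)
    have hb3 : ((k.factorial : ℂ) * ((2*l+k+5).factorial : ℂ)) ≠ 0 :=
      mul_ne_zero (fact_nz _) (fact_nz _)
    have hb12 : (((k+2).factorial : ℂ) * ((2*l+k+3).factorial : ℂ)) *
        (((k+1).factorial : ℂ) * ((2*l+k+4).factorial : ℂ)) ≠ 0 := mul_ne_zero hb1 hb2
    have hL : (((k+2).factorial : ℂ) * ((2*l+k+5).factorial : ℂ)) ≠ 0 :=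
      mul_ne_zero (fact_nz _) (fact_nz _)
    rw [← mul_div_assoc, div_add_div _ _ hb1 hb2, div_add_div _ _ hb12 hb3,
      div_eq_div_iff hL (mul_ne_zero hb12 hb3)]
    rw [e1, e2, e3, e4, e5]
    push_cast
    ring

lemma hc_head (m : ℕ) : hc (m+1) 0 = hc m 0 + hc m 1 := by
  rcases Nat.eq_zero_or_pos m with rfl | hm
  · -- m = 0
    rw [show hc 0 1 = 0 from hc_of_gt (by omega), hc, if_pos (by omega), hc, if_pos (by omega)]
    norm_num [Nat.factorial]
  · obtain ⟨k, rfl⟩ : ∃ k, m = k + 1 := ⟨m - 1, by omega⟩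
    rw [hc, if_pos (by omega), hc, if_pos (by omega), hc, if_pos (by omega)]
    rw [show k + 1 + 1 - 0 = k + 2 by omega, show k + 1 - 0 = k + 1 by omega,
        show k + 1 - 1 = k by omega,
        show k + 1 + 1 + 0 + 1 = k + 3 by ring, show k + 1 + 0 + 1 = k + 2 by ring,
        show k + 1 + 1 + 1 = k + 3 by ring,
        show 2 * (k + 1 + 1) = 2*k + 4 by ring, show 2 * (k + 1) = 2*k + 2 by ring]
    have e1 : ((2*k+4).factorial : ℂ) = (2*k+4)*(2*k+3)*((2*k+2).factorial) := by
      rw [show 2*k+4 = (2*k+2)+1+1 by ring, fpeel, fpeel]; push_cast; ring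
    have e2 : ((k+2).factorial : ℂ) = (k+2)*(k+1)*(k.factorial) := by
      rw [show k+2 = k+1+1 by ring, fpeel, fpeel]; push_cast; ring
    have e3 : ((k+1).factorial : ℂ) = (k+1)*(k.factorial) := by
      rw [fpeel]
    have e4 : ((k+3).factorial : ℂ) = (k+3)*(k+2)*(k+1)*(k.factorial) := by
      rw [show k+3 = k+1+1+1 by ring, fpeel, fpeel, fpeel]; push_cast; ring
    have hb1 : (((k+1).factorial : ℂ) * ((k+2).factorial : ℂ)) ≠ 0 :=
      mul_ne_zero (fact_nz _) (fact_nz _)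
    have hb2 : ((k.factorial : ℂ) * ((k+3).factorial : ℂ)) ≠ 0 :=
      mul_ne_zero (fact_nz _) (fact_nz _)
    have hL : (((k+2).factorial : ℂ) * ((k+3).factorial : ℂ)) ≠ 0 :=
      mul_ne_zero (fact_nz _) (fact_nz _)
    rw [div_add_div _ _ hb1 hb2, div_eq_div_iff hL (mul_ne_zero hb1 hb2)]
    rw [e1, e2, e3, e4]
    push_cast
    ring

theorem hecke_aux (x : ℂ) (a : ℕ → ℂ) (h0 : a 0 = 1) (h1 : a 1 = x)
    (hrec : ∀ n : ℕ, a (n + 2) = x * a (n + 1) - a n) (m : ℕ) :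
    x ^ (2 * m) = ∑ l ∈ Finset.range (m + 1), hc m l * a (2 * l) := by
  have key : ∀ l : ℕ, x ^ 2 * a (2 * l) =
      a (2 * (l + 1)) + 2 * a (2 * l) + a (2 * (l - 1)) - (if l = 0 then 2 * a 0 else 0) := by
    intro l
    match l with
    | 0 =>
      simp only [if_pos rfl]
      norm_num
      have E0 := hrec 0
      linear_combination (-1 : ℂ) * E0 - x * h1 + x^2 * h0
    | n + 1 =>
      simp only [show n + 1 - 1 = n by omega, if_neg (by omega : ¬ n + 1 = 0)]
      rw [show 2 * (n + 1 + 1) = 2*n + 2 + 2 by ring, show 2 * (n + 1) = 2*n + 1 + 1 by ring]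
      have E0 := hrec (2*n)
      have E1 := hrec (2*n+1)
      have E2 := hrec (2*n+2)
      rw [show 2*n + 1 + 1 = 2*n + 2 by ring] at E1 ⊢
      linear_combination (-1 : ℂ) * E2 - x * E1 - E0
  induction m with
  | zero => simp [hc_diag, h0]
  | succ m ih =>
    have hstep : x ^ (2 * (m+1)) = ∑ l ∈ range (m+1),
        hc m l * (a (2 * (l + 1)) + 2 * a (2 * l) + a (2 * (l - 1))
          - (if l = 0 then 2 * a 0 else 0)) := by
      have : x ^ (2 * (m+1)) = x ^ 2 * x ^ (2 * m) := by ring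
      rw [this, ih, Finset.mul_sum]
      refine Finset.sum_congr rfl fun l _ => ?_
      rw [← key l]; ring
    rw [hstep]
    -- expand the product and split the sum
    have expand : ∑ l ∈ range (m+1),
        hc m l * (a (2 * (l + 1)) + 2 * a (2 * l) + a (2 * (l - 1))
          - (if l = 0 then 2 * a 0 else 0))
      = (∑ l ∈ range (m+1), hc m l * a (2 * (l + 1)))
        + (∑ l ∈ range (m+1), 2 * (hc m l * a (2 * l)))
        + (∑ l ∈ range (m+1), hc m l * a (2 * (l - 1)))
        - hc m 0 * (2 * a 0) := by
      rw [← Finset.sum_add_distrib, ← Finset.sum_add_distrib]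
      have hD : hc m 0 * (2 * a 0) =
          ∑ l ∈ range (m+1), hc m l * (if l = 0 then 2 * a 0 else 0) := by
        simp only [mul_ite, mul_zero]
        rw [Finset.sum_ite_eq' (range (m+1)) 0 (fun l => hc m l * (2 * a 0))]
        simp
      rw [hD, ← Finset.sum_sub_distrib]
      refine Finset.sum_congr rfl fun l _ => ?_
      ring
    rw [expand]
    -- shift the middle sum
    have hB : ∑ l ∈ range (m+1), 2 * (hc m l * a (2 * l))
        = (∑ l ∈ range (m+1), 2 * (hc m (l+1) * a (2 * (l + 1)))) + 2 * (hc m 0 * a 0) := by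
      rw [Finset.sum_range_succ' (fun l => 2 * (hc m l * a (2 * l))) m,
        Finset.sum_range_succ (fun l => 2 * (hc m (l+1) * a (2 * (l + 1)))) m,
        hc_of_gt (by omega : m < m + 1)]
      norm_num
    -- shift the third sum (twice)
    have hC : ∑ l ∈ range (m+1), hc m l * a (2 * (l - 1))
        = (∑ l ∈ range (m+1), hc m (l+2) * a (2 * (l + 1)))
          + hc m 1 * a 0 + hc m 0 * a 0 := by
      rw [Finset.sum_range_succ' (fun l => hc m l * a (2 * (l - 1))) m]
      simp only [show ∀ l : ℕ, l + 1 - 1 = l from fun l => rfl, Nat.zero_sub, Nat.mul_zero]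
      -- now : ∑ l ∈ range m, hc m (l+1) * a (2*l) + hc m 0 * a 0 = ...
      have h1' : ∑ l ∈ range m, hc m (l+1) * a (2*l)
          = ∑ l ∈ range (m+1), hc m (l+1) * a (2*l) := by
        rw [Finset.sum_range_succ, hc_of_gt (by omega : m < m + 1)]
        ring
      rw [h1', Finset.sum_range_succ' (fun l => hc m (l+1) * a (2*l)) m]
      have h2' : ∑ l ∈ range m, hc m (l+1+1) * a (2*(l+1))
          = ∑ l ∈ range (m+1), hc m (l+2) * a (2*(l+1)) := by
        rw [Finset.sum_range_succ, hc_of_gt (by omega : m < m + 2)]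
        norm_num
      rw [h2']
    rw [hB, hC]
    -- assemble the target
    rw [Finset.sum_range_succ' (fun l => hc (m+1) l * a (2 * l)) (m+1)]
    have hmain : ∑ l ∈ range (m+1), hc (m+1) (l+1) * a (2 * (l+1))
        = (∑ l ∈ range (m+1), hc m l * a (2 * (l + 1)))
          + (∑ l ∈ range (m+1), 2 * (hc m (l+1) * a (2 * (l + 1))))
          + (∑ l ∈ range (m+1), hc m (l+2) * a (2 * (l + 1))) := by
      rw [← Finset.sum_add_distrib, ← Finset.sum_add_distrib]
      refine Finset.sum_congr rfl fun l _ => ?_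
      rw [hc_rec]
      ring
    rw [hmain, hc_head]
    ring

/-- Even-power linearization of Hecke eigenvalues: if `a(n)` satisfies the Hecke
relations at a prime (`a(0) = 1`, `a(1) = x`, `a(n+2) = x a(n+1) − a(n)`), then
`x^{2m} = ∑_{l=0}^{m} (2m)!(2l+1)/((m−l)!(m+l+1)!) · a(2l)`. -/
theorem hecke_even_power (x : ℂ) (a : ℕ → ℂ) (h0 : a 0 = 1) (h1 : a 1 = x)
    (hrec : ∀ n : ℕ, a (n + 2) = x * a (n + 1) - a n) (m : ℕ) :
    x ^ (2 * m) = ∑ l ∈ Finset.range (m + 1),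
      (((2 * m).factorial * (2 * l + 1) : ℂ) /
        ((m - l).factorial * (m + l + 1).factorial : ℂ)) * a (2 * l) := by
  rw [hecke_aux x a h0 h1 hrec m]
  refine Finset.sum_congr rfl fun l hl => ?_
  rw [hc, if_pos (by simp at hl; omega)]
end
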